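/- arXiv:1803.06334 — 4 statements merged into one kernel-verified Lean document; each statement's English description precedes it below -/
import Mathlib

section
/- For all odd positive integers r and s and every real ε > 0, there exist a set S of positive integers and a bijection f : ℕ → S such that f avoids (r, s) 3-progressions, the lower density of S is at least rs/(r+s)² − ε, and the upper density of S is at least s/(r+s) − ε. -/
namespace AvoidRS




/-- reversal of the low `m` bits of `i` (bits above `m` are discarded) -/
def rev : ℕ → ℕ → ℕ
  | 0, _ => 0
  | m+1, i => i % 2 * 2 ^ m + rev m (i / 2)

lemma rev_lt : ∀ m i, rev m i < 2 ^ m := by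
  intro m
  induction m with
  | zero => intro i; simp [rev]
  | succ m ih =>
    intro i
    have h1 := ih (i / 2)
    have h2 : i % 2 = 0 ∨ i % 2 = 1 := Nat.mod_two_eq_zero_or_one i
    have h3 : (2:ℕ) ^ (m+1) = 2 ^ m + 2 ^ m := by ring
    rcases h2 with h | h <;> simp only [rev, h, h3] <;> omega

lemma div2_mod (i v : ℕ) : i / 2 % 2 ^ v = i % 2 ^ (v+1) / 2 := by
  rw [pow_succ, mul_comm, Nat.mod_mul_right_div_self]

lemma rev_mod : ∀ m i, rev m (i % 2 ^ m) = rev m i := by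
  intro m
  induction m with
  | zero => intro i; simp [rev]
  | succ m ih =>
    intro i
    have e2 : i % 2 ^ (m+1) % 2 = i % 2 := Nat.mod_mod_of_dvd i ⟨2^m, by ring⟩
    have e3 : i % 2 ^ (m+1) / 2 = i / 2 % 2 ^ m := (div2_mod i m).symm
    simp only [rev, e2, e3, ih]

lemma rev_high (m i : ℕ) : rev (m+1) i = i / 2 ^ m % 2 + 2 * rev m i := by
  induction m generalizing i with
  | zero => simp [rev]
  | succ m ih =>
    have e1 : i / 2 / 2 ^ m = i / 2 ^ (m+1) := by
      rw [Nat.div_div_eq_div_mul, pow_succ, mul_comm]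
    calc rev (m+2) i = i % 2 * 2 ^ (m+1) + rev (m+1) (i / 2) := rfl
    _ = i % 2 * 2 ^ (m+1) + (i / 2 / 2 ^ m % 2 + 2 * rev m (i / 2)) := by rw [ih]
    _ = i / 2 ^ (m+1) % 2 + 2 * (i % 2 * 2 ^ m + rev m (i / 2)) := by rw [e1]; ring
    _ = i / 2 ^ (m+1) % 2 + 2 * rev (m+1) i := rfl

lemma rev_rev : ∀ m i, i < 2 ^ m → rev m (rev m i) = i := by
  intro m
  induction m with
  | zero => intro i h; interval_cases i; rfl
  | succ m ih =>
    intro i h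
    have hlt : rev m (i / 2) < 2 ^ m := rev_lt m (i / 2)
    have hi2 : i / 2 < 2 ^ m := by
      have : i < 2 ^ m * 2 := by rw [← pow_succ]; exact h
      omega
    have key : rev (m+1) i = rev m (i / 2) + 2 ^ m * (i % 2) := by
      show i % 2 * 2 ^ m + rev m (i / 2) = _; ring
    rw [key, rev_high]
    have e1 : (rev m (i / 2) + 2 ^ m * (i % 2)) / 2 ^ m = i % 2 := by
      rw [Nat.add_mul_div_left _ _ (by positivity : 0 < 2 ^ m),
        Nat.div_eq_of_lt hlt, Nat.zero_add]
    have e2 : rev m (rev m (i / 2) + 2 ^ m * (i % 2)) = i / 2 := by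
      rw [← rev_mod, Nat.add_mul_mod_self_left, rev_mod, ih _ hi2]
    rw [e1, e2]; omega





lemma rev_lt_rev : ∀ (v m u w : ℕ), u < 2 ^ m → w < 2 ^ m →
    u % 2 ^ v = w % 2 ^ v → u / 2 ^ v % 2 = 1 → w / 2 ^ v % 2 = 0 →
    rev m w < rev m u := by
  intro v
  induction v with
  | zero =>
    intro m u w hu hw _ hu1 hw0
    simp only [pow_zero, Nat.div_one] at hu1 hw0
    match m with
    | 0 => omega
    | m+1 =>
      have h1 : rev (m+1) u = u % 2 * 2 ^ m + rev m (u / 2) := rfl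
      have h2 : rev (m+1) w = w % 2 * 2 ^ m + rev m (w / 2) := rfl
      have := rev_lt m (w / 2)
      rw [h1, h2, hu1, hw0]
      have := rev_lt m (u / 2)
      omega
  | succ v ih =>
    intro m u w hu hw hmod hu1 hw0
    match m with
    | 0 =>
      interval_cases u <;> interval_cases w <;> simp_all
    | m+1 =>
      have e0 : u % 2 = w % 2 := by
        have h1 : u % 2 ^ (v+1) % 2 = u % 2 := Nat.mod_mod_of_dvd u ⟨2^v, by ring⟩
        have h2 : w % 2 ^ (v+1) % 2 = w % 2 := Nat.mod_mod_of_dvd w ⟨2^v, by ring⟩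
        omega
      have hmod' : u / 2 % 2 ^ v = w / 2 % 2 ^ v := by
        rw [div2_mod, div2_mod, hmod]
      have hdd : ∀ x : ℕ, x / 2 / 2 ^ v = x / 2 ^ (v+1) := fun x => by
        rw [Nat.div_div_eq_div_mul, pow_succ, mul_comm]
      have key := ih m (u / 2) (w / 2) (by omega) (by omega)
        hmod' (by rw [hdd]; exact hu1) (by rw [hdd]; exact hw0)
      have h1 : rev (m+1) u = u % 2 * 2 ^ m + rev m (u / 2) := rfl
      have h2 : rev (m+1) w = w % 2 * 2 ^ m + rev m (w / 2) := rfl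
      rw [h1, h2, e0]
      omega



section Seq




variable (r s N : ℕ)

/-- (left endpoint, right endpoint) of the k-th block `Set.Ioc x y` -/
def XY : ℕ → ℕ × ℕ
  | 0 => (0, N)
  | k+1 =>
    let y := (XY k).2
    let x := (r + s) * y / r + 1
    (x, x + ((s * (x - y + 1) - 1) / r + 1))

def X (k : ℕ) : ℕ := (XY r s N k).1
def Y (k : ℕ) : ℕ := (XY r s N k).2
/-- number of elements of block k -/
def W (k : ℕ) : ℕ := Y r s N k - X r s N k

lemma X_zero : X r s N 0 = 0 := rfl
lemma Y_zero : Y r s N 0 = N := rfl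
lemma X_succ (k : ℕ) : X r s N (k+1) = (r + s) * Y r s N k / r + 1 := rfl
lemma Y_succ (k : ℕ) : Y r s N (k+1)
    = X r s N (k+1) + ((s * (X r s N (k+1) - Y r s N k + 1) - 1) / r + 1) := rfl

lemma X_lt_Y (hN : 0 < N) (k : ℕ) : X r s N k < Y r s N k := by
  cases k with
  | zero => simpa [X_zero, Y_zero] using hN
  | succ k => rw [Y_succ]; exact Nat.lt_add_of_pos_right (Nat.succ_pos _)

lemma W_eq (k : ℕ) : W r s N (k+1) = (s * (X r s N (k+1) - Y r s N k + 1) - 1) / r + 1 := by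
  unfold W
  rw [Y_succ]
  exact Nat.add_sub_cancel_left _ _

lemma Y_lt_X_succ (hr : 0 < r) (hs : 0 < s) (k : ℕ) : Y r s N k < X r s N (k+1) := by
  rw [X_succ]
  have h : r * Y r s N k ≤ (r + s) * Y r s N k :=
    Nat.mul_le_mul (by omega) le_rfl
  have := Nat.div_mul_le_self ((r+s) * Y r s N k) r
  have h2 : Y r s N k ≤ (r + s) * Y r s N k / r := by
    apply (Nat.le_div_iff_mul_le hr).2
    calc Y r s N k * r = r * Y r s N k := by ring
    _ ≤ _ := h
  omega

variable (hr : 0 < r) (hs : 0 < s) (hN : 0 < N)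
include hr hs hN

lemma X_lt_X_succ (k : ℕ) : X r s N k < X r s N (k+1) :=
  lt_trans (X_lt_Y r s N hN k) (Y_lt_X_succ r s N hr hs k)

lemma X_strictMono : StrictMono (X r s N) :=
  strictMono_nat_of_lt_succ (X_lt_X_succ r s N hr hs hN)

lemma Y_strictMono : StrictMono (Y r s N) :=
  strictMono_nat_of_lt_succ (fun k =>
    lt_trans (Y_lt_X_succ r s N hr hs k) (X_lt_Y r s N hN (k+1)))

lemma Y_lt_X_of_lt {k l : ℕ} (h : k < l) : Y r s N k < X r s N l :=
  lt_of_lt_of_le (Y_lt_X_succ r s N hr hs k)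
    ((X_strictMono r s N hr hs hN).le_iff_le.2 h)

/-- key fact (C1): `(r+s) Y k ≤ r X (k+1)` -/
lemma F3 (k : ℕ) : (r + s) * Y r s N k ≤ r * X r s N (k+1) := by
  rw [X_succ]
  have h1 := Nat.div_add_mod ((r + s) * Y r s N k) r
  have h2 : (r + s) * Y r s N k % r < r := Nat.mod_lt _ hr
  set q := (r + s) * Y r s N k / r
  calc (r + s) * Y r s N k = r * q + (r + s) * Y r s N k % r := h1.symm
  _ ≤ r * q + r := by omega
  _ = r * (q + 1) := by ring

/-- key fact (C2), half 1: `r (W (k+1) - 1) < s G` where `G = X(k+1) - Y k + 1` -/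
lemma F4 (k : ℕ) :
    r * (W r s N (k+1) - 1) < s * (X r s N (k+1) - Y r s N k + 1) := by
  rw [W_eq]
  set G := X r s N (k+1) - Y r s N k + 1 with hGdef
  have hstep : (s * G - 1) / r + 1 - 1 = (s * G - 1) / r := Nat.succ_sub_one _
  rw [hstep]
  have h1 : r * ((s * G - 1) / r) ≤ s * G - 1 := by
    rw [mul_comm]; exact Nat.div_mul_le_self _ r
  have h2 : 0 < s * G := by positivity
  exact lt_of_le_of_lt h1 (by omega)

/-- key fact (C2), half 2: `s G ≤ r W (k+1)` -/
lemma F5 (k : ℕ) :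
    s * (X r s N (k+1) - Y r s N k + 1) ≤ r * W r s N (k+1) := by
  rw [W_eq]
  set G := X r s N (k+1) - Y r s N k + 1
  have h1 := Nat.div_add_mod (s * G - 1) r
  have h2 : (s * G - 1) % r < r := Nat.mod_lt _ hr
  have h2' : 0 < s * G := by positivity
  set q := (s * G - 1) / r
  have : r * (q + 1) = r * q + r := by ring
  omega



end Seq





variable (r s N : ℕ)

/-- the bound used for bit-reversal in block `k` -/
def M (k : ℕ) : ℕ := Y r s N k + 1

lemma lt_two_pow_M {k v : ℕ} (h : v ≤ Y r s N k) : v < 2 ^ M r s N k :=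
  lt_of_le_of_lt h (lt_of_lt_of_le Nat.lt_two_pow_self
    (Nat.pow_le_pow_right (by norm_num) (Nat.le_succ _)))

/-- block `k` as a list, in bit-reversal order -/
def blockList (k : ℕ) : List ℕ :=
  ((List.range (2 ^ M r s N k)).map (rev (M r s N k))).filter
    (fun v => decide (X r s N k < v ∧ v ≤ Y r s N k))

lemma mem_blockList {k v : ℕ} :
    v ∈ blockList r s N k ↔ X r s N k < v ∧ v ≤ Y r s N k := by
  constructor
  · intro h
    have := List.of_mem_filter h
    simpa using this
  · intro h
    apply List.mem_filter.2
    refine ⟨List.mem_map.2 ⟨rev (M r s N k) v, List.mem_range.2 (rev_lt _ _), ?_⟩, by simpa using h⟩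
    exact rev_rev _ _ (lt_two_pow_M r s N h.2)

lemma pairwise_blockList (k : ℕ) :
    (blockList r s N k).Pairwise
      (fun a b => rev (M r s N k) a < rev (M r s N k) b) := by
  apply List.Pairwise.filter
  apply List.pairwise_map.2
  apply List.pairwise_lt_range.imp_of_mem
  intro a b ha hb hlt
  rw [rev_rev _ _ (List.mem_range.1 ha), rev_rev _ _ (List.mem_range.1 hb)]
  exact hlt

lemma blockList_ne_nil (hN : 0 < N) (hXY : X r s N k < Y r s N k) : (blockList r s N k) ≠ [] := by
  intro h
  have : Y r s N k ∈ blockList r s N k := (mem_blockList r s N).2 ⟨hXY, le_rfl⟩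
  simp [h] at this

/-- cumulative lengths: `FLp k` = number of indices before block `k` -/
def FLp : ℕ → ℕ
  | 0 => 0
  | k+1 => FLp k + (blockList r s N k).length

/-- cumulative list of the first `k+1` blocks -/
def FL : ℕ → List ℕ
  | 0 => blockList r s N 0
  | k+1 => FL k ++ blockList r s N (k+1)

lemma FLp_succ (k : ℕ) : FLp r s N (k+1) = FLp r s N k + (blockList r s N k).length := rfl

lemma FL_length (k : ℕ) : (FL r s N k).length = FLp r s N (k+1) := by
  induction k with
  | zero => simp [FL, FLp]
  | succ k ih => simp [FL, FLp, ih]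

/-- the enumeration -/
def f (n : ℕ) : ℕ := (FL r s N n).getD n 0

lemma FLp_mono : Monotone (FLp r s N) := by
  apply monotone_nat_of_le_succ
  intro k
  simp [FLp]

lemma decomp_aux (K : ℕ) : ∀ n, n < FLp r s N (K+1) →
    ∃ k ≤ K, ∃ j, j < (blockList r s N k).length ∧ n = FLp r s N k + j ∧
      (FL r s N K).getD n 0 = (blockList r s N k).getD j 0 := by
  induction K with
  | zero =>
    intro n hn
    exact ⟨0, le_rfl, n, by simpa [FLp] using hn, by simp [FLp], by simp [FL]⟩
  | succ K ih =>
    intro n hn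
    by_cases h : n < FLp r s N (K+1)
    · obtain ⟨k, hk, j, hj, hnj, hget⟩ := ih n h
      refine ⟨k, le_trans hk (Nat.le_succ _), j, hj, hnj, ?_⟩
      rw [show FL r s N (K+1) = FL r s N K ++ blockList r s N (K+1) from rfl,
        List.getD_append _ _ _ _ (by rw [FL_length]; exact h)]
      exact hget
    · push_neg at h
      refine ⟨K+1, le_rfl, n - FLp r s N (K+1), ?_, by omega, ?_⟩
      · have h2 := FLp_succ r s N (K+1)
        omega
      · rw [show FL r s N (K+1) = FL r s N K ++ blockList r s N (K+1) from rfl,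
          List.getD_append_right _ _ _ _ (by rw [FL_length]; exact h), FL_length]

lemma FLp_ge (hN : 0 < N) (hXlt : ∀ k, X r s N k < Y r s N k) (k : ℕ) : k ≤ FLp r s N k := by
  induction k with
  | zero => simp
  | succ k ih =>
    have h : (blockList r s N k).length ≠ 0 := by
      simpa [List.length_eq_zero_iff] using blockList_ne_nil r s N hN (hXlt k)
    have h2 := FLp_succ r s N k
    omega

lemma f_eq_getD (hN : 0 < N) (hXlt : ∀ k, X r s N k < Y r s N k) (K n : ℕ)
    (h : n < (FL r s N K).length) : f r s N n = (FL r s N K).getD n 0 := by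
  rcases le_total n K with hnK | hnK
  · -- FL n is a prefix of FL K
    have hpre : ∀ a b : ℕ, FL r s N a <+: FL r s N (a + b) := by
      intro a b
      induction b with
      | zero => simp
      | succ b ih => exact ih.trans ⟨blockList r s N (a+b+1), rfl⟩
    obtain ⟨t, ht⟩ := hpre n (K - n)
    have hK : n + (K - n) = K := by omega
    rw [hK] at ht
    have hlen : n < (FL r s N n).length := by
      rw [FL_length]
      have := FLp_ge r s N hN hXlt (n+1)
      omega
    rw [f, ← ht, List.getD_append _ _ _ _ hlen]
  · have hpre : ∀ a b : ℕ, FL r s N a <+: FL r s N (a + b) := by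
      intro a b
      induction b with
      | zero => simp
      | succ b ih => exact ih.trans ⟨blockList r s N (a+b+1), rfl⟩
    obtain ⟨t, ht⟩ := hpre K (n - K)
    have hK : K + (n - K) = n := by omega
    rw [hK] at ht
    rw [f, ← ht, List.getD_append _ _ _ _ h]

/-- every index decomposes into (block, position in block) -/
lemma decomp (hN : 0 < N) (hXlt : ∀ k, X r s N k < Y r s N k) (n : ℕ) :
    ∃ k, ∃ j, j < (blockList r s N k).length ∧ n = FLp r s N k + j ∧
      f r s N n = (blockList r s N k).getD j 0 := by
  have hn : n < FLp r s N (n+1) := by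
    have := FLp_ge r s N hN hXlt (n+1)
    omega
  obtain ⟨k, hk, j, hj, hnj, hget⟩ := decomp_aux r s N n n hn
  exact ⟨k, j, hj, hnj, by rw [← hget]; rfl⟩

/-- ordering of decompositions -/
lemma decomp_ord {n n' k k' j j' : ℕ}
    (hj : j < (blockList r s N k).length) (hn : n = FLp r s N k + j)
    (hj' : j' < (blockList r s N k').length) (hn' : n' = FLp r s N k' + j')
    (hlt : n < n') : k < k' ∨ (k = k' ∧ j < j') := by
  rcases lt_trichotomy k k' with h | h | h
  · exact Or.inl h
  · subst h; right; exact ⟨rfl, by omega⟩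
  · exfalso
    have h1 : FLp r s N (k'+1) ≤ FLp r s N k := FLp_mono r s N h
    have h2 := FLp_succ r s N k'
    omega





lemma odd_mul_int (a : ℕ) (ha : Odd a) (d : ℤ) (hd : d ≠ 0) :
    ∃ t : ℤ, (a:ℤ) * d = 2 ^ ((d.natAbs).factorization 2) * (2*t+1) := by
  set v := (d.natAbs).factorization 2 with hv
  set n := d.natAbs with hn
  have hn0 : n ≠ 0 := Int.natAbs_ne_zero.2 hd
  have hsplit : 2 ^ v * (n / 2 ^ v) = n := Nat.ordProj_mul_ordCompl_eq_self n 2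
  have hodd2 : ¬ 2 ∣ (n / 2 ^ v) := Nat.not_dvd_ordCompl Nat.prime_two hn0
  have hoddm : Odd (a * (n / 2 ^ v)) := ha.mul (Nat.odd_iff.2 (by omega))
  obtain ⟨c, hc⟩ := hoddm
  have key : a * n = 2 ^ v * (2 * c + 1) := by
    rw [← hsplit, show a * (2^v * (n / 2^v)) = 2^v * (a * (n / 2^v)) from by ring, hc]
  have keyz : (a:ℤ) * (n:ℤ) = 2 ^ v * (2 * (c:ℤ) + 1) := by exact_mod_cast key
  rcases Int.natAbs_eq d with h | h
  · exact ⟨c, by rw [h, ← hn]; exact keyz⟩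
  · exact ⟨-c-1, by rw [h, ← hn]; linear_combination -keyz⟩

lemma bit_flip {u w v : ℕ} {t : ℤ} (h : (w:ℤ) = (u:ℤ) + 2^v*(2*t+1)) :
    u % 2^v = w % 2^v ∧ u / 2^v % 2 ≠ w / 2^v % 2 := by
  have e1 : (w:ℤ) % (2:ℤ)^v = (u:ℤ) % (2:ℤ)^v := by
    rw [h, Int.add_mul_emod_self_left]
  have e2 : (w:ℤ) / (2:ℤ)^v = (u:ℤ) / (2:ℤ)^v + (2*t+1) := by
    rw [h, Int.add_mul_ediv_left _ _ (by positivity : ((2:ℤ)^v) ≠ 0)]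
  constructor
  · have : ((u % 2^v : ℕ) : ℤ) = ((w % 2^v : ℕ) : ℤ) := by
      push_cast
      rw [e1]
    exact_mod_cast this
  · intro hcontra
    have hz : ((u / 2^v % 2 : ℕ) : ℤ) = ((w / 2^v % 2 : ℕ) : ℤ) := by
      exact_mod_cast congrArg (Nat.cast : ℕ → ℤ) hcontra
    push_cast at hz
    rw [e2] at hz
    set x := (u:ℤ) / (2:ℤ)^v with hx
    omega



section Avoid

variable (r s N : ℕ)

lemma f_mem_block (hN : 0 < N) {n k j : ℕ} (hj : j < (blockList r s N k).length)
    (hget : f r s N n = (blockList r s N k).getD j 0) :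
    X r s N k < f r s N n ∧ f r s N n ≤ Y r s N k := by
  rw [hget, List.getD_eq_getElem _ _ hj]
  exact (mem_blockList r s N).1 (List.getElem_mem hj)

theorem avoid (hr : 0 < r) (hs : 0 < s) (hN : 0 < N) (hrodd : Odd r) (hsodd : Odd s) :
    ¬ ∃ (i₁ i₂ i₃ : ℕ) (d : ℤ), i₁ < i₂ ∧ i₂ < i₃ ∧ d ≠ 0 ∧
      (f r s N i₂ : ℤ) = (f r s N i₁ : ℤ) + r * d ∧
      (f r s N i₃ : ℤ) = (f r s N i₂ : ℤ) + s * d := by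
  rintro ⟨i₁, i₂, i₃, d, h12, h23, hd, e2, e3⟩
  have hXlt : ∀ k, X r s N k < Y r s N k := X_lt_Y r s N hN
  obtain ⟨k₁, j₁, hj₁, hn₁, hg₁⟩ := decomp r s N hN hXlt i₁
  obtain ⟨k₂, j₂, hj₂, hn₂, hg₂⟩ := decomp r s N hN hXlt i₂
  obtain ⟨k₃, j₃, hj₃, hn₃, hg₃⟩ := decomp r s N hN hXlt i₃
  have m₁ := f_mem_block r s N hN hj₁ hg₁
  have m₂ := f_mem_block r s N hN hj₂ hg₂
  have m₃ := f_mem_block r s N hN hj₃ hg₃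
  have ord12 := decomp_ord r s N hj₁ hn₁ hj₂ hn₂ h12
  have ord23 := decomp_ord r s N hj₂ hn₂ hj₃ hn₃ h23
  have hrz : (0:ℤ) < (r:ℤ) := by exact_mod_cast hr
  have hsz : (0:ℤ) < (s:ℤ) := by exact_mod_cast hs
  by_cases hck : k₂ < k₃
  · -- u₃ is in a later block than u₂ : impossible by size
    have hkX : X r s N (k₂+1) ≤ X r s N k₃ :=
      (X_strictMono r s N hr hs hN).monotone hck
    have hu3 : (X r s N (k₂+1) : ℤ) + 1 ≤ (f r s N i₃ : ℤ) := by
      have := m₃.1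
      have : X r s N (k₂+1) < f r s N i₃ := lt_of_le_of_lt hkX this
      exact_mod_cast this
    have hu2Y : (f r s N i₂ : ℤ) ≤ (Y r s N k₂ : ℤ) := by exact_mod_cast m₂.2
    have hu1 : (1:ℤ) ≤ (f r s N i₁ : ℤ) := by
      have : 0 < f r s N i₁ := lt_of_le_of_lt (Nat.zero_le _) m₁.1
      exact_mod_cast this
    have hF3 : ((r:ℤ) + s) * (Y r s N k₂ : ℤ) ≤ (r:ℤ) * (X r s N (k₂+1) : ℤ) := by
      exact_mod_cast F3 r s N hr hs hN k₂
    have iden : (r:ℤ) * (f r s N i₃ : ℤ)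
        = ((r:ℤ) + s) * (f r s N i₂ : ℤ) - (s:ℤ) * (f r s N i₁ : ℤ) := by
      linear_combination (r:ℤ) * e3 - (s:ℤ) * e2
    have p1 : ((r:ℤ) + s) * (f r s N i₂ : ℤ) ≤ ((r:ℤ) + s) * (Y r s N k₂ : ℤ) :=
      mul_le_mul_of_nonneg_left hu2Y (by positivity)
    have p2 : (r:ℤ) * ((X r s N (k₂+1) : ℤ) + 1) ≤ (r:ℤ) * (f r s N i₃ : ℤ) :=
      mul_le_mul_of_nonneg_left hu3 (by positivity)
    have p3 : (s:ℤ) * 1 ≤ (s:ℤ) * (f r s N i₁ : ℤ) :=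
      mul_le_mul_of_nonneg_left hu1 (by positivity)
    linarith [iden, p1, p2, p3, hF3]
  · have hk23 : k₂ = k₃ := by
      rcases ord23 with h | h
      · exact absurd h hck
      · exact h.1
    subst hk23
    by_cases hck2 : k₁ < k₂
    · -- u₂, u₃ in the same block, u₁ in an earlier one : impossible by size
      obtain ⟨t, rfl⟩ : ∃ t, k₂ = t+1 := ⟨k₂-1, by omega⟩
      have hY1t : Y r s N k₁ ≤ Y r s N t :=
        (Y_strictMono r s N hr hs hN).monotone (by omega)
      have hA : (X r s N (t+1) : ℤ) + 1 - (Y r s N t : ℤ) ≤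
          (f r s N i₂ : ℤ) - (f r s N i₁ : ℤ) := by
        have h1 : f r s N i₁ ≤ Y r s N t := le_trans m₁.2 hY1t
        have h2 : X r s N (t+1) < f r s N i₂ := m₂.1
        have h1' : (f r s N i₁ : ℤ) ≤ (Y r s N t : ℤ) := by exact_mod_cast h1
        have h2' : (X r s N (t+1) : ℤ) + 1 ≤ (f r s N i₂ : ℤ) := by exact_mod_cast h2
        linarith
      have hB : (f r s N i₃ : ℤ) - (f r s N i₂ : ℤ) ≤
          (Y r s N (t+1) : ℤ) - (X r s N (t+1) : ℤ) - 1 := by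
        have h1 : (f r s N i₃ : ℤ) ≤ (Y r s N (t+1) : ℤ) := by exact_mod_cast m₃.2
        have h2 : (X r s N (t+1) : ℤ) + 1 ≤ (f r s N i₂ : ℤ) := by exact_mod_cast m₂.1
        linarith
      have iden : (r:ℤ) * ((f r s N i₃ : ℤ) - (f r s N i₂ : ℤ))
          = (s:ℤ) * ((f r s N i₂ : ℤ) - (f r s N i₁ : ℤ)) := by
        linear_combination (r:ℤ) * e3 - (s:ℤ) * e2
      have hWpos : 1 ≤ W r s N (t+1) := by rw [W_eq]; exact Nat.le_add_left 1 _
      have hXYt : Y r s N t < X r s N (t+1) := Y_lt_X_succ r s N hr hs t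
      have hWz : (W r s N (t+1) : ℤ)
          = (Y r s N (t+1) : ℤ) - (X r s N (t+1) : ℤ) := by
        have := le_of_lt (hXlt (t+1))
        rw [W]
        push_cast [Nat.cast_sub this]
        ring
      have hF4 : (r:ℤ) * ((W r s N (t+1) : ℤ) - 1)
          < (s:ℤ) * ((X r s N (t+1) : ℤ) - (Y r s N t : ℤ) + 1) := by
        have h := F4 r s N hr hs hN t
        have hc : ((r * (W r s N (t+1) - 1) : ℕ) : ℤ)
            < ((s * (X r s N (t+1) - Y r s N t + 1) : ℕ) : ℤ) := by exact_mod_cast h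
        push_cast [Nat.cast_sub hWpos, Nat.cast_sub (le_of_lt hXYt)] at hc
        linarith
      have p1 : (s:ℤ) * ((X r s N (t+1) : ℤ) + 1 - (Y r s N t : ℤ))
          ≤ (s:ℤ) * ((f r s N i₂ : ℤ) - (f r s N i₁ : ℤ)) :=
        mul_le_mul_of_nonneg_left hA (by positivity)
      have p2 : (r:ℤ) * ((f r s N i₃ : ℤ) - (f r s N i₂ : ℤ))
          ≤ (r:ℤ) * ((Y r s N (t+1) : ℤ) - (X r s N (t+1) : ℤ) - 1) :=
        mul_le_mul_of_nonneg_left hB (by positivity)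
      rw [hWz] at hF4
      linarith [iden, p1, p2, hF4]
    · -- all three in the same block : impossible by bit-reversal order
      have hk12 : k₁ = k₂ := by
        rcases ord12 with h | h
        · exact absurd h hck2
        · exact h.1
      subst hk12
      have hj12 : j₁ < j₂ := by
        rcases ord12 with h | h
        · omega
        · exact h.2
      have hj23 : j₂ < j₃ := by
        rcases ord23 with h | h
        · omega
        · exact h.2
      set v := (d.natAbs).factorization 2 with hv
      obtain ⟨t2, ht2⟩ := odd_mul_int r hrodd d hd
      obtain ⟨t3, ht3⟩ := odd_mul_int s hsodd d hd
      have hw2 : (f r s N i₂ : ℤ) = (f r s N i₁ : ℤ) + 2^v*(2*t2+1) := by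
        rw [e2, ht2]
      have hw3 : (f r s N i₃ : ℤ) = (f r s N i₂ : ℤ) + 2^v*(2*t3+1) := by
        rw [e3, ht3]
      have bits12 := bit_flip hw2
      have bits23 := bit_flip hw3
      -- bit-reversal order facts
      have pw := pairwise_blockList r s N k₁
      have hu1g : f r s N i₁ = (blockList r s N k₁)[j₁] := by
        rw [hg₁, List.getD_eq_getElem _ _ hj₁]
      have hu2g : f r s N i₂ = (blockList r s N k₁)[j₂] := by
        rw [hg₂, List.getD_eq_getElem _ _ hj₂]
      have hu3g : f r s N i₃ = (blockList r s N k₁)[j₃] := by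
        rw [hg₃, List.getD_eq_getElem _ _ hj₃]
      have R12 : rev (M r s N k₁) (f r s N i₁) < rev (M r s N k₁) (f r s N i₂) := by
        rw [hu1g, hu2g]
        exact List.pairwise_iff_getElem.1 pw j₁ j₂ hj₁ hj₂ hj12
      have R23 : rev (M r s N k₁) (f r s N i₂) < rev (M r s N k₁) (f r s N i₃) := by
        rw [hu2g, hu3g]
        exact List.pairwise_iff_getElem.1 pw j₂ j₃ hj₂ hj₃ hj23
      have hlt1 : f r s N i₁ < 2 ^ M r s N k₁ := lt_two_pow_M r s N m₁.2
      have hlt2 : f r s N i₂ < 2 ^ M r s N k₁ := lt_two_pow_M r s N m₂.2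
      have hlt3 : f r s N i₃ < 2 ^ M r s N k₁ := lt_two_pow_M r s N m₃.2
      have hb1 := Nat.mod_two_eq_zero_or_one (f r s N i₁ / 2^v)
      have hb2 := Nat.mod_two_eq_zero_or_one (f r s N i₂ / 2^v)
      have hb3 := Nat.mod_two_eq_zero_or_one (f r s N i₃ / 2^v)
      rcases (show (f r s N i₁ / 2^v % 2 = 1 ∧ f r s N i₂ / 2^v % 2 = 0)
          ∨ (f r s N i₂ / 2^v % 2 = 1 ∧ f r s N i₃ / 2^v % 2 = 0) from by omega)
        with ⟨hA, hB⟩ | ⟨hA, hB⟩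
      · exact absurd R12 (not_lt.2 (le_of_lt
          (rev_lt_rev v (M r s N k₁) _ _ hlt1 hlt2 bits12.1 hA hB)))
      · exact absurd R23 (not_lt.2 (le_of_lt
          (rev_lt_rev v (M r s N k₁) _ _ hlt2 hlt3 bits23.1 hA hB)))

end Avoid

section Bijection

variable (r s N : ℕ) (hr : 0 < r) (hs : 0 < s) (hN : 0 < N)
include hr hs hN

lemma f_ne (n n' : ℕ) (hlt : n < n') : f r s N n ≠ f r s N n' := by
  intro heq
  have hXlt : ∀ k, X r s N k < Y r s N k := X_lt_Y r s N hN
  obtain ⟨k, j, hj, hn, hg⟩ := decomp r s N hN hXlt n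
  obtain ⟨k', j', hj', hn', hg'⟩ := decomp r s N hN hXlt n'
  have m := f_mem_block r s N hN hj hg
  have m' := f_mem_block r s N hN hj' hg'
  rcases decomp_ord r s N hj hn hj' hn' hlt with h | ⟨hk, hjj⟩
  · have hYX : Y r s N k < X r s N k' := Y_lt_X_of_lt r s N hr hs hN h
    omega
  · subst hk
    have hpw := List.pairwise_iff_getElem.1 (pairwise_blockList r s N k) j j' hj hj' hjj
    rw [← List.getD_eq_getElem _ _ hj, ← List.getD_eq_getElem _ _ hj', ← hg, ← hg', heq] at hpw
    exact lt_irrefl _ hpw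

lemma f_injective : Function.Injective (f r s N) := by
  intro a b hab
  by_contra hne
  rcases Nat.lt_or_ge a b with h | h
  · exact f_ne r s N hr hs hN a b h hab
  · exact f_ne r s N hr hs hN b a (by omega) hab.symm

lemma range_f : Set.range (f r s N) = ⋃ k, Set.Ioc (X r s N k) (Y r s N k) := by
  have hXlt : ∀ k, X r s N k < Y r s N k := X_lt_Y r s N hN
  ext z
  constructor
  · rintro ⟨n, rfl⟩
    obtain ⟨k, j, hj, hn, hg⟩ := decomp r s N hN hXlt n
    have m := f_mem_block r s N hN hj hg
    exact Set.mem_iUnion.2 ⟨k, Set.mem_Ioc.2 m⟩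
  · intro hz
    obtain ⟨k, hk⟩ := Set.mem_iUnion.1 hz
    rw [Set.mem_Ioc] at hk
    have hzK : z ∈ blockList r s N k := (mem_blockList r s N).2 hk
    obtain ⟨j, hj, hzj⟩ := List.mem_iff_getElem.1 hzK
    refine ⟨FLp r s N k + j, ?_⟩
    have hlen : FLp r s N k + j < (FL r s N k).length := by
      rw [FL_length, FLp_succ]
      omega
    rw [f_eq_getD r s N hN hXlt k _ hlen]
    have : (FL r s N k).getD (FLp r s N k + j) 0 = (blockList r s N k).getD j 0 := by
      cases k with
      | zero =>
        have h0 : FLp r s N 0 = 0 := rfl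
        rw [h0, Nat.zero_add]
        rfl
      | succ K =>
        rw [show FL r s N (K+1) = FL r s N K ++ blockList r s N (K+1) from rfl,
          List.getD_append_right _ _ _ _ (by rw [FL_length]; omega), FL_length]
        congr 1
        omega
    rw [this, List.getD_eq_getElem _ _ hj, hzj]

lemma f_pos (n : ℕ) : 0 < f r s N n := by
  have hXlt : ∀ k, X r s N k < Y r s N k := X_lt_Y r s N hN
  obtain ⟨k, j, hj, hn, hg⟩ := decomp r s N hN hXlt n
  have m := f_mem_block r s N hN hj hg
  omega

end Bijection

section Count

variable (r s N : ℕ)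

/-- the k-th block as a Finset -/
def Bf (k : ℕ) : Finset ℕ := Finset.Ioc (X r s N k) (Y r s N k)

/-- union of the first k blocks -/
def Uf (k : ℕ) : Finset ℕ := (Finset.range k).biUnion (Bf r s N)

/-- total size of the first k blocks -/
def Csum (k : ℕ) : ℕ := ∑ j ∈ Finset.range k, W r s N j

variable (hr : 0 < r) (hs : 0 < s) (hN : 0 < N)
include hr hs hN

lemma card_Bf (k : ℕ) : (Bf r s N k).card = W r s N k := by
  rw [Bf, Nat.card_Ioc]; rfl

lemma mem_Bf_le {k x : ℕ} (hx : x ∈ Bf r s N k) : X r s N k < x ∧ x ≤ Y r s N k :=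
  Finset.mem_Ioc.1 hx

lemma card_Uf (k : ℕ) : (Uf r s N k).card = Csum r s N k := by
  induction k with
  | zero => simp [Uf, Csum]
  | succ k ih =>
    have hUsucc : Uf r s N (k+1) = Bf r s N k ∪ Uf r s N k := by
      rw [Uf, Uf, Finset.range_add_one, Finset.biUnion_insert]
    have hdisj : Disjoint (Bf r s N k) (Uf r s N k) := by
      rw [Finset.disjoint_left]
      intro x hx hx'
      obtain ⟨j, hj, hxj⟩ := Finset.mem_biUnion.1 hx'
      have hj' : j < k := Finset.mem_range.1 hj
      have h1 := mem_Bf_le r s N hr hs hN hx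
      have h2 := mem_Bf_le r s N hr hs hN hxj
      have h3 : Y r s N j ≤ Y r s N (k-1) :=
        (Y_strictMono r s N hr hs hN).monotone (by omega)
      have h4 : Y r s N (k-1) < X r s N k := by
        have := Y_lt_X_succ r s N hr hs (k-1)
        have hk : k - 1 + 1 = k := by omega
        rwa [hk] at this
      omega
    rw [hUsucc, Finset.card_union_of_disjoint hdisj, card_Bf r s N hr hs hN, ih,
      show Csum r s N (k+1) = Csum r s N k + W r s N k from Finset.sum_range_succ _ _]
    omega

lemma Csum_succ (k : ℕ) : Csum r s N (k+1) = Csum r s N k + W r s N k :=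
  Finset.sum_range_succ _ _

lemma Csum_one : Csum r s N 1 = N := by
  rw [Csum]
  simp [W, X_zero, Y_zero]

lemma Y_eq_X_add_W (k : ℕ) : Y r s N k = X r s N k + W r s N k := by
  have := X_lt_Y r s N hN k
  rw [W]
  omega

/-- invariant 2 : the density at block ends is at least s/(r+s)  -/
lemma inv2 : ∀ k, s * Y r s N k ≤ (r+s) * Csum r s N (k+1) := by
  intro k
  induction k with
  | zero =>
    rw [Csum_one r s N hr hs hN, Y_zero]
    exact Nat.mul_le_mul_right N (by omega)
  | succ k ih =>
    -- work in ℤ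
    have hYe : (Y r s N (k+1) : ℤ) = X r s N (k+1) + W r s N (k+1) := by
      exact_mod_cast Y_eq_X_add_W r s N hr hs hN (k+1)
    have hCe : (Csum r s N (k+2) : ℤ) = Csum r s N (k+1) + W r s N (k+1) := by
      exact_mod_cast Csum_succ r s N hr hs hN (k+1)
    have hXYt : Y r s N k < X r s N (k+1) := Y_lt_X_succ r s N hr hs k
    have hF5 : (s:ℤ) * ((X r s N (k+1) : ℤ) - (Y r s N k : ℤ) + 1)
        ≤ (r:ℤ) * (W r s N (k+1) : ℤ) := by
      have h := F5 r s N hr hs hN k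
      have hc : ((s * (X r s N (k+1) - Y r s N k + 1) : ℕ) : ℤ)
          ≤ ((r * W r s N (k+1) : ℕ) : ℤ) := by exact_mod_cast h
      push_cast [Nat.cast_sub (le_of_lt hXYt)] at hc
      linarith
    have ihz : (s:ℤ) * (Y r s N k : ℤ) ≤ ((r:ℤ)+s) * (Csum r s N (k+1) : ℤ) := by
      exact_mod_cast ih
    have goalz : (s:ℤ) * (Y r s N (k+1) : ℤ) ≤ ((r:ℤ)+s) * (Csum r s N (k+2) : ℤ) := by
      have e1 : (s:ℤ) * (Y r s N (k+1) : ℤ)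
          = s * (X r s N (k+1) : ℤ) + s * (W r s N (k+1) : ℤ) := by rw [hYe]; ring
      have e2 : ((r:ℤ)+s) * (Csum r s N (k+2) : ℤ)
          = ((r:ℤ)+s) * (Csum r s N (k+1) : ℤ) + r * (W r s N (k+1) : ℤ)
            + s * (W r s N (k+1) : ℤ) := by rw [hCe]; ring
      have hsz : (0:ℤ) < s := by exact_mod_cast hs
      linarith
    exact_mod_cast goalz

/-- invariant 1 : the density at block starts is at least rs/(r+s)²  -/
lemma inv1 : ∀ k, r * s * X r s N (k+1) ≤ (r+s)^2 * Csum r s N (k+1) := by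
  have hrz : (0:ℤ) < r := by exact_mod_cast hr
  have hsz : (0:ℤ) < s := by exact_mod_cast hs
  have hNz : (1:ℤ) ≤ N := by exact_mod_cast hN
  -- the ℕ bound r * X (k+1) ≤ (r+s) * Y k + r
  have hXub : ∀ k, (r:ℤ) * (X r s N (k+1) : ℤ) ≤ ((r:ℤ)+s) * (Y r s N k : ℤ) + r := by
    intro k
    have h1 : r * X r s N (k+1) ≤ (r+s) * Y r s N k + r := by
      rw [X_succ]
      have h2 := Nat.div_add_mod ((r + s) * Y r s N k) r
      set q := (r + s) * Y r s N k / r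
      calc r * (q + 1) = r * q + r := by ring
      _ ≤ (r+s) * Y r s N k + r := by omega
    exact_mod_cast h1
  intro k
  induction k with
  | zero =>
    have hbase : (r:ℤ) * s * (X r s N 1 : ℤ) ≤ ((r:ℤ)+s)^2 * (Csum r s N 1 : ℤ) := by
      rw [Csum_one r s N hr hs hN]
      have h1 := hXub 0
      rw [Y_zero] at h1
      -- multiply by s :  r s X1 ≤ s(r+s)N + rs ≤ (r+s)² N
      have h2 : (s:ℤ) * ((r:ℤ) * (X r s N 1 : ℤ)) ≤ s * (((r:ℤ)+s) * N + r) :=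
        mul_le_mul_of_nonneg_left h1 (by positivity)
      have h3 : (r:ℤ)*((r:ℤ)+s)*1 ≤ (r:ℤ)*((r:ℤ)+s)*N :=
        mul_le_mul_of_nonneg_left hNz (by positivity)
      nlinarith [h2, h3, sq_nonneg ((r:ℤ)), sq_nonneg ((s:ℤ))]
    exact_mod_cast hbase
  | succ k ih =>
    have ihz : (r:ℤ) * s * (X r s N (k+1) : ℤ) ≤ ((r:ℤ)+s)^2 * (Csum r s N (k+1) : ℤ) := by
      exact_mod_cast ih
    have hXYt : Y r s N (k+1) < X r s N (k+2) := Y_lt_X_succ r s N hr hs (k+1)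
    have hXYt' : Y r s N k < X r s N (k+1) := Y_lt_X_succ r s N hr hs k
    have hF5 : (s:ℤ) * ((X r s N (k+1) : ℤ) - (Y r s N k : ℤ) + 1)
        ≤ (r:ℤ) * (W r s N (k+1) : ℤ) := by
      have h := F5 r s N hr hs hN k
      have hc : ((s * (X r s N (k+1) - Y r s N k + 1) : ℕ) : ℤ)
          ≤ ((r * W r s N (k+1) : ℕ) : ℤ) := by exact_mod_cast h
      push_cast [Nat.cast_sub (le_of_lt hXYt')] at hc
      linarith
    have hF3 : ((r:ℤ)+s) * (Y r s N k : ℤ) ≤ (r:ℤ) * (X r s N (k+1) : ℤ) := by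
      exact_mod_cast F3 r s N hr hs hN k
    have hYe : (Y r s N (k+1) : ℤ) = X r s N (k+1) + W r s N (k+1) := by
      exact_mod_cast Y_eq_X_add_W r s N hr hs hN (k+1)
    have hCe : (Csum r s N (k+2) : ℤ) = Csum r s N (k+1) + W r s N (k+1) := by
      exact_mod_cast Csum_succ r s N hr hs hN (k+1)
    have hWpos : (0:ℤ) ≤ (W r s N (k+1) : ℤ) := by positivity
    have hXpos : (0:ℤ) ≤ (X r s N (k+1) : ℤ) := by positivity
    -- key : rs + s² X(k+1) ≤ r(r+s) W(k+1)
    have key : (r:ℤ)*s + s^2 * (X r s N (k+1) : ℤ) ≤ (r:ℤ)*((r:ℤ)+s)*(W r s N (k+1) : ℤ) := by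
      have h2 : ((r:ℤ)+s) * ((s:ℤ) * ((X r s N (k+1) : ℤ) - (Y r s N k : ℤ) + 1))
          ≤ ((r:ℤ)+s) * ((r:ℤ) * (W r s N (k+1) : ℤ)) :=
        mul_le_mul_of_nonneg_left hF5 (by positivity)
      have h3 : (s:ℤ) * (((r:ℤ)+s) * (Y r s N k : ℤ))
          ≤ (s:ℤ) * ((r:ℤ) * (X r s N (k+1) : ℤ)) :=
        mul_le_mul_of_nonneg_left hF3 (by positivity)
      nlinarith [h2, h3, sq_nonneg ((s:ℤ)), mul_pos hrz hsz]
    have goalz : (r:ℤ) * s * (X r s N (k+2) : ℤ) ≤ ((r:ℤ)+s)^2 * (Csum r s N (k+2) : ℤ) := by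
      have h4 : (r:ℤ)*s*((r:ℤ) * (X r s N (k+2):ℤ))
          ≤ (r:ℤ)*s*(((r:ℤ)+s) * (Y r s N (k+1) : ℤ) + r) :=
        mul_le_mul_of_nonneg_left (hXub (k+1)) (by positivity)
      have h1 : (r:ℤ)*((r:ℤ)*s*(X r s N (k+1):ℤ)) ≤ (r:ℤ)*(((r:ℤ)+s)^2 * (Csum r s N (k+1):ℤ)) :=
        mul_le_mul_of_nonneg_left ihz (by positivity)
      rw [hYe] at h4
      have h5 : (r:ℤ)*((r:ℤ)*s + s^2 * (X r s N (k+1) : ℤ))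
          ≤ (r:ℤ)*((r:ℤ)*((r:ℤ)+s)*(W r s N (k+1) : ℤ)) :=
        mul_le_mul_of_nonneg_left key (by positivity)
      have hmul : (r:ℤ)*((r:ℤ)*s*(X r s N (k+2):ℤ)) ≤ (r:ℤ)*(((r:ℤ)+s)^2 * (Csum r s N (k+2):ℤ)) := by
        rw [hCe]
        nlinarith [h4, h1, h5]
      exact le_of_mul_le_mul_left hmul hrz
    exact_mod_cast goalz

lemma inv1' : ∀ k, r * s * X r s N k ≤ (r+s)^2 * Csum r s N k := by
  intro k
  cases k with
  | zero => simp [X_zero]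
  | succ k => exact inv1 r s N hr hs hN k

end Count

section Density

variable (r s N : ℕ) (hr : 0 < r) (hs : 0 < s) (hN : 0 < N)
include hr hs hN

lemma ncard_lower (F : Finset ℕ) (n : ℕ)
    (hsub : ↑F ⊆ Set.range (f r s N) ∩ Set.Icc 1 n) :
    F.card ≤ (Set.range (f r s N) ∩ Set.Icc 1 n).ncard := by
  have hfin : (Set.range (f r s N) ∩ Set.Icc 1 n).Finite :=
    (Set.finite_Icc 1 n).subset Set.inter_subset_right
  calc F.card = (↑F : Set ℕ).ncard := (Set.ncard_coe_finset F).symm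
  _ ≤ _ := Set.ncard_le_ncard hsub hfin

lemma count_gap (k n : ℕ) (hYn : Y r s N k ≤ n) :
    Csum r s N (k+1) ≤ (Set.range (f r s N) ∩ Set.Icc 1 n).ncard := by
  rw [← card_Uf r s N hr hs hN]
  apply ncard_lower r s N hr hs hN
  intro x hx
  obtain ⟨j, hj, hxj⟩ := Finset.mem_biUnion.1 hx
  have hj' : j < k + 1 := Finset.mem_range.1 hj
  have h1 := mem_Bf_le r s N hr hs hN hxj
  have hYj : Y r s N j ≤ Y r s N k := (Y_strictMono r s N hr hs hN).monotone (by omega)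
  constructor
  · rw [range_f r s N hr hs hN]
    exact Set.mem_iUnion.2 ⟨j, Set.mem_Ioc.2 h1⟩
  · exact Set.mem_Icc.2 ⟨by omega, by omega⟩

lemma count_block (k n : ℕ) (hx : X r s N k ≤ n) (hy : n ≤ Y r s N k) :
    Csum r s N k + (n - X r s N k) ≤ (Set.range (f r s N) ∩ Set.Icc 1 n).ncard := by
  have hdisj : Disjoint (Uf r s N k) (Finset.Ioc (X r s N k) n) := by
    rw [Finset.disjoint_left]
    intro x hx' hx''
    obtain ⟨j, hj, hxj⟩ := Finset.mem_biUnion.1 hx'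
    have hj' : j < k := Finset.mem_range.1 hj
    have h1 := mem_Bf_le r s N hr hs hN hxj
    have h3 : Y r s N j ≤ Y r s N (k-1) :=
      (Y_strictMono r s N hr hs hN).monotone (by omega)
    have h4 : Y r s N (k-1) < X r s N k := by
      have := Y_lt_X_succ r s N hr hs (k-1)
      have hk : k - 1 + 1 = k := by omega
      rwa [hk] at this
    have h5 := Finset.mem_Ioc.1 hx''
    omega
  have hcard : (Uf r s N k ∪ Finset.Ioc (X r s N k) n).card
      = Csum r s N k + (n - X r s N k) := by
    rw [Finset.card_union_of_disjoint hdisj, card_Uf r s N hr hs hN, Nat.card_Ioc]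
  rw [← hcard]
  apply ncard_lower r s N hr hs hN
  intro x hxm
  rcases Finset.mem_union.1 hxm with hx' | hx'
  · obtain ⟨j, hj, hxj⟩ := Finset.mem_biUnion.1 hx'
    have hj' : j < k := Finset.mem_range.1 hj
    have h1 := mem_Bf_le r s N hr hs hN hxj
    have h3 : Y r s N j ≤ Y r s N (k-1) :=
      (Y_strictMono r s N hr hs hN).monotone (by omega)
    have h4 : Y r s N (k-1) < X r s N k := by
      have := Y_lt_X_succ r s N hr hs (k-1)
      have hk : k - 1 + 1 = k := by omega
      rwa [hk] at this
    constructor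
    · rw [range_f r s N hr hs hN]
      exact Set.mem_iUnion.2 ⟨j, Set.mem_Ioc.2 h1⟩
    · exact Set.mem_Icc.2 ⟨by omega, by omega⟩
  · have h1 := Finset.mem_Ioc.1 hx'
    constructor
    · rw [range_f r s N hr hs hN]
      exact Set.mem_iUnion.2 ⟨k, Set.mem_Ioc.2 ⟨h1.1, by omega⟩⟩
    · exact Set.mem_Icc.2 ⟨by omega, h1.2⟩

lemma rs_le_sq : r * s ≤ (r + s)^2 := by nlinarith

lemma density_all (n : ℕ) :
    r * s * n ≤ (r+s)^2 * (Set.range (f r s N) ∩ Set.Icc 1 n).ncard := by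
  set k := Nat.findGreatest (fun k => X r s N k ≤ n) n with hk
  have hXk : X r s N k ≤ n := by
    have h := Nat.findGreatest_spec (P := fun k => X r s N k ≤ n) (Nat.zero_le n)
      (by show X r s N 0 ≤ n; rw [X_zero]; exact Nat.zero_le n)
    simpa [← hk] using h
  have hnk : n < X r s N (k+1) := by
    by_contra hcontra
    push_neg at hcontra
    have h1 : k + 1 ≤ X r s N (k+1) := (X_strictMono r s N hr hs hN).le_apply
    have hle : k + 1 ≤ n := le_trans h1 hcontra
    have h2 := Nat.findGreatest_is_greatest (P := fun k => X r s N k ≤ n)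
      (by omega : Nat.findGreatest (fun k => X r s N k ≤ n) n < k + 1) hle
    exact h2 hcontra
  clear_value k
  clear hk
  rcases le_or_gt n (Y r s N k) with hny | hny
  · -- n inside block k
    obtain ⟨m, rfl⟩ : ∃ m, n = X r s N k + m := ⟨n - X r s N k, by omega⟩
    have hc := count_block r s N hr hs hN k _ hXk hny
    rw [Nat.add_sub_cancel_left] at hc
    calc r * s * (X r s N k + m) = r * s * X r s N k + r * s * m := by ring
    _ ≤ (r+s)^2 * Csum r s N k + (r+s)^2 * m :=
        Nat.add_le_add (inv1' r s N hr hs hN k)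
          (Nat.mul_le_mul_right m (rs_le_sq r s N hr hs hN))
    _ = (r+s)^2 * (Csum r s N k + m) := by ring
    _ ≤ (r+s)^2 * (Set.range (f r s N) ∩ Set.Icc 1 (X r s N k + m)).ncard :=
        Nat.mul_le_mul_left _ hc
  · -- n in the gap after block k
    have hc := count_gap r s N hr hs hN k n (le_of_lt hny)
    calc r * s * n ≤ r * s * X r s N (k+1) :=
        Nat.mul_le_mul_left _ (by omega)
    _ ≤ (r+s)^2 * Csum r s N (k+1) := inv1 r s N hr hs hN k
    _ ≤ (r+s)^2 * (Set.range (f r s N) ∩ Set.Icc 1 n).ncard :=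
        Nat.mul_le_mul_left _ hc

lemma density_peak (k : ℕ) :
    s * Y r s N k ≤ (r+s) * (Set.range (f r s N) ∩ Set.Icc 1 (Y r s N k)).ncard := by
  have hc := count_gap r s N hr hs hN k (Y r s N k) le_rfl
  calc s * Y r s N k ≤ (r+s) * Csum r s N (k+1) := inv2 r s N hr hs hN k
  _ ≤ _ := Nat.mul_le_mul_left _ hc

lemma count_le (n : ℕ) : (Set.range (f r s N) ∩ Set.Icc 1 n).ncard ≤ n := by
  calc (Set.range (f r s N) ∩ Set.Icc 1 n).ncard
      ≤ (Set.Icc 1 n).ncard :=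
        Set.ncard_le_ncard Set.inter_subset_right (Set.finite_Icc 1 n)
  _ = n := by
      rw [← Finset.coe_Icc, Set.ncard_coe_finset, Nat.card_Icc]
      omega

end Density

end AvoidRS

open Filter

/-- For all odd positive integers `r` and `s` and `ε > 0`, there exist a set `S` of
positive integers and a bijection `f : ℕ → S` avoiding `(r, s)` 3-progressions, with
lower density of `S` at least `rs/(r+s)² − ε` and upper density at least
`s/(r+s) − ε`. -/
theorem density_posint_avoid_rs_3prog (r s : ℕ)
    (hrodd : Odd r) (hr : 0 < r) (hsodd : Odd s) (hs : 0 < s) (ε : ℝ) (hε : 0 < ε) :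
    ∃ (S : Set ℕ) (f : ℕ → ℕ),
      (∀ m ∈ S, 0 < m) ∧
      Function.Injective f ∧ Set.range f = S ∧
      (¬ ∃ (i₁ i₂ i₃ : ℕ) (d : ℤ), i₁ < i₂ ∧ i₂ < i₃ ∧ d ≠ 0 ∧
        (f i₂ : ℤ) = (f i₁ : ℤ) + r * d ∧ (f i₃ : ℤ) = (f i₂ : ℤ) + s * d) ∧
      (r : ℝ) * s / ((r : ℝ) + s) ^ 2 - ε ≤
        liminf (fun n : ℕ => ((S ∩ Set.Icc 1 n).ncard : ℝ) / n) atTop ∧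
      (s : ℝ) / ((r : ℝ) + s) - ε ≤
        limsup (fun n : ℕ => ((S ∩ Set.Icc 1 n).ncard : ℝ) / n) atTop := by
  have hN : (0:ℕ) < 1 := one_pos
  set F := AvoidRS.f r s 1 with hF
  set S := Set.range F with hS
  have hrR : (0:ℝ) < r := by exact_mod_cast hr
  have hsR : (0:ℝ) < s := by exact_mod_cast hs
  -- the density sequence and its boundedness
  have hub : ∀ n : ℕ, ((S ∩ Set.Icc 1 n).ncard : ℝ) / n ≤ 1 := by
    intro n
    rcases Nat.eq_zero_or_pos n with h0 | h0
    · subst h0; simp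
    · have hc := AvoidRS.count_le r s 1 hr hs hN n
      have hn0 : (0:ℝ) < n := by exact_mod_cast h0
      rw [div_le_one hn0]
      exact_mod_cast hc
  have hbdd : IsBoundedUnder (· ≤ ·) atTop
      (fun n : ℕ => ((S ∩ Set.Icc 1 n).ncard : ℝ) / n) :=
    Filter.isBoundedUnder_of ⟨1, fun n => hub n⟩
  refine ⟨S, F, ?_, AvoidRS.f_injective r s 1 hr hs hN, rfl, ?_, ?_, ?_⟩
  · rintro m ⟨n, rfl⟩
    exact AvoidRS.f_pos r s 1 hr hs hN n
  · exact AvoidRS.avoid r s 1 hr hs hN hrodd hsodd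
  · -- liminf bound
    apply Filter.le_liminf_of_le hbdd.isCoboundedUnder_ge
    filter_upwards [eventually_ge_atTop 1] with n hn
    have hd := AvoidRS.density_all r s 1 hr hs hN n
    have hn0 : (0:ℝ) < n := by exact_mod_cast hn
    have h1 : (r:ℝ) * s / ((r:ℝ) + s) ^ 2 ≤ ((S ∩ Set.Icc 1 n).ncard : ℝ) / n := by
      rw [div_le_div_iff₀ (by positivity) hn0]
      have hdz : ((r * s * n : ℕ) : ℝ) ≤ (((r+s)^2 * (S ∩ Set.Icc 1 n).ncard : ℕ) : ℝ) := by
        exact_mod_cast hd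
      push_cast at hdz
      linarith
    linarith
  · -- limsup bound
    apply Filter.le_limsup_of_frequently_le _ hbdd
    rw [Filter.frequently_atTop]
    intro a
    refine ⟨AvoidRS.Y r s 1 a, (AvoidRS.Y_strictMono r s 1 hr hs hN).le_apply, ?_⟩
    have hd := AvoidRS.density_peak r s 1 hr hs hN a
    have hY1 : 1 ≤ AvoidRS.Y r s 1 a := by
      have h0 : AvoidRS.Y r s 1 0 ≤ AvoidRS.Y r s 1 a :=
        (AvoidRS.Y_strictMono r s 1 hr hs hN).monotone (Nat.zero_le a)
      rw [AvoidRS.Y_zero] at h0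
      exact h0
    have hY0 : (0:ℝ) < (AvoidRS.Y r s 1 a : ℝ) := by exact_mod_cast hY1
    have h1 : (s:ℝ) / ((r:ℝ) + s)
        ≤ ((S ∩ Set.Icc 1 (AvoidRS.Y r s 1 a)).ncard : ℝ) / (AvoidRS.Y r s 1 a) := by
      rw [div_le_div_iff₀ (by positivity) hY0]
      have hdz : ((s * AvoidRS.Y r s 1 a : ℕ) : ℝ)
          ≤ (((r+s) * (S ∩ Set.Icc 1 (AvoidRS.Y r s 1 a)).ncard : ℕ) : ℝ) := by
        exact_mod_cast hd
      push_cast at hdz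
      linarith
    linarith
end

section
/- For all odd positive integers r and s and every real ε > 0, there exist a set S of integers and a bijection f : ℕ → S such that f avoids (r, s) 3-progressions, the lower density of S is at least rs/((r+s)(r+2s)) − ε, and the upper density of S is at least s/(r+s) − ε. -/
set_option linter.unusedSectionVars false
set_option linter.unusedVariables false

open Filter Finset

namespace RS3

variable (r s B : ℕ)

/-- `(M_k, N_k)`: the k-th annulus is `±[M_k+1, N_k]`. -/
def MN : ℕ → ℕ × ℕ
  | 0 => (0, B)
  | k+1 =>
    let N := (MN k).2
    let M := ((r + 2*s) * N) / r + 1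
    (M, M + (s * (M - N)) / r)

def Mk (k : ℕ) : ℕ := (MN r s B k).1
def Nk (k : ℕ) : ℕ := (MN r s B k).2

variable {r s B}
variable (hr : 0 < r) (hs : 0 < s)

lemma M_succ (k : ℕ) : Mk r s B (k+1) = ((r + 2*s) * Nk r s B k) / r + 1 := rfl
lemma N_succ (k : ℕ) :
    Nk r s B (k+1) = Mk r s B (k+1) + (s * (Mk r s B (k+1) - Nk r s B k)) / r := rfl
lemma M_zero : Mk r s B 0 = 0 := rfl
lemma N_zero : Nk r s B 0 = B := rfl

include hr in
/-- (F2) `r * M_{k+1} > (r+2s) * N_k`. -/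
lemma F2 (k : ℕ) : (r + 2*s) * Nk r s B k < r * Mk r s B (k+1) := by
  rw [M_succ, Nat.mul_add, Nat.mul_one]
  have h1 := Nat.div_add_mod ((r + 2*s) * Nk r s B k) r
  have h2 := Nat.mod_lt ((r + 2*s) * Nk r s B k) hr
  nlinarith

include hr in
lemma N_lt_M_succ (k : ℕ) : Nk r s B k < Mk r s B (k+1) := by
  have := F2 (r := r) (s := s) (B := B) hr k
  nlinarith

/-- (F3) `r * W_{k+1} ≤ s * (M_{k+1} - N_k)`. -/
lemma F3 (k : ℕ) :
    r * (Nk r s B (k+1) - Mk r s B (k+1)) ≤ s * (Mk r s B (k+1) - Nk r s B k) := by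
  rw [N_succ]
  have := Nat.mul_div_le (s * (Mk r s B (k+1) - Nk r s B k)) r
  rw [Nat.add_sub_cancel_left, Nat.mul_comm]
  exact Nat.div_mul_le_self _ _ |>.trans_eq (Nat.mul_comm _ _) |>.trans (le_of_eq (Nat.mul_comm _ _))

lemma M_le_N (k : ℕ) : Mk r s B k ≤ Nk r s B k := by
  cases k with
  | zero => simp [Mk, Nk, MN]
  | succ k => rw [N_succ]; exact Nat.le_add_right _ _

variable (hB : r * r + r + s + 1 ≤ B)

/-- width of block k -/
def W (r s B k : ℕ) : ℕ := Nk r s B k - Mk r s B k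
/-- cumulative positive count -/
def C (r s B k : ℕ) : ℕ := ∑ j ∈ Finset.range (k+1), W r s B j

include hr in
lemma N_strictMono : StrictMono (Nk r s B) := by
  apply strictMono_nat_of_lt_succ
  intro k
  exact (N_lt_M_succ hr k).trans_le (M_le_N (k+1))

include hr in
lemma N_mono : Monotone (Nk r s B) := (N_strictMono hr).monotone

include hr hB in
lemma N_ge_B (k : ℕ) : B ≤ Nk r s B k := by
  induction k with
  | zero => exact le_rfl
  | succ k ih => exact ih.trans (N_strictMono hr (Nat.lt_succ_self k)).le

include hr hs hB in
/-- `M_{k+1} - N_k ≥ 2r`, so widths are positive. -/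
lemma M_sub_N_large (k : ℕ) : Nk r s B k + 2 * r ≤ Mk r s B (k+1) := by
  have h2 := F2 hr (s := s) (B := B) k
  have h3 := N_ge_B hr hB k
  have h4 : 2 * s * Nk r s B k ≥ 2 * B := by nlinarith
  nlinarith

include hr hs hB in
lemma W_pos (k : ℕ) : 0 < W r s B k := by
  cases k with
  | zero =>
    have : Nk r s B 0 = B := rfl
    have : Mk r s B 0 = 0 := rfl
    simp [W, N_zero, M_zero]; omega
  | succ k =>
    have hM := M_sub_N_large hr hs hB k
    -- W (k+1) = (s * (M - N)) / r with s*(M-N) ≥ s*2r ≥ r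
    have : r ≤ s * (Mk r s B (k+1) - Nk r s B k) := by
      have : 2 * r ≤ Mk r s B (k+1) - Nk r s B k := by omega
      nlinarith
    have hd : 1 ≤ s * (Mk r s B (k+1) - Nk r s B k) / r := by
      rw [Nat.le_div_iff_mul_le hr]; omega
    simp only [W, N_succ, Nat.add_sub_cancel_left]
    exact hd

include hr in
/-- Main density invariant, pure ℕ: `s·N_k ≤ (r+s)·C_k + r·k`. -/
lemma C_invariant (k : ℕ) : s * Nk r s B k ≤ (r+s) * C r s B k + r * k := by
  induction k with
  | zero =>
    have h1 : C r s B 0 = B := by simp [C, W, N_zero, M_zero]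
    rw [h1, N_zero]; nlinarith
  | succ k ih =>
    have hC : C r s B (k+1) = C r s B k + W r s B (k+1) := by
      simp [C, Finset.sum_range_succ]
    have hNM := N_lt_M_succ (s := s) (B := B) hr k
    have hW : W r s B (k+1) = (s * (Mk r s B (k+1) - Nk r s B k)) / r := by
      simp only [W, N_succ, Nat.add_sub_cancel_left]
    -- r * W_{k+1} ≥ s*(M-N) - (r-1)
    have hdiv := Nat.div_add_mod (s * (Mk r s B (k+1) - Nk r s B k)) r
    have hmod := Nat.mod_lt (s * (Mk r s B (k+1) - Nk r s B k)) hr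
    have hrW : s * (Mk r s B (k+1) - Nk r s B k) ≤ r * W r s B (k+1) + r := by
      rw [hW]; omega
    have hNs : Nk r s B (k+1) = Mk r s B (k+1) + W r s B (k+1) := by
      rw [N_succ, hW]
    have expand : s * Nk r s B (k+1) = s * (Mk r s B (k+1) - Nk r s B k) + s * Nk r s B k
        + s * W r s B (k+1) := by
      rw [hNs]; have := hNM.le; nlinarith [Nat.sub_add_cancel hNM.le]
    calc s * Nk r s B (k+1)
        = s * (Mk r s B (k+1) - Nk r s B k) + s * Nk r s B k + s * W r s B (k+1) := expand
      _ ≤ (r * W r s B (k+1) + r) + ((r+s) * C r s B k + r * k) + s * W r s B (k+1) := by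
          gcongr
      _ ≤ (r+s) * C r s B (k+1) + r * (k+1) := by rw [hC]; nlinarith

/-- `r·s·M_{k+1} ≤ s·(r+2s)·N_k + r·s` (used for the liminf bound). -/
lemma M_upper (k : ℕ) : r * s * Mk r s B (k+1) ≤ s * (r + 2*s) * Nk r s B k + r * s := by
  have h := Nat.div_mul_le_self ((r + 2*s) * Nk r s B k) r
  have h2 := Nat.mul_div_le ((r + 2*s) * Nk r s B k) r
  rw [M_succ]
  nlinarith

include hr hs hB in
/-- growth: `r·B + 2·B·k ≤ r·N_k`. -/
lemma N_growth (k : ℕ) : r * B + 2 * B * k ≤ r * Nk r s B k := by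
  induction k with
  | zero => simp [N_zero]
  | succ k ih =>
    have h2 := F2 hr (s := s) (B := B) k
    have h3 := N_ge_B hr hB k
    have h4 : r * Nk r s B (k+1) ≥ r * Mk r s B (k+1) := by
      have := M_le_N (r := r) (s := s) (B := B) (k+1); nlinarith
    have h5 : 2 * s * Nk r s B k ≥ 2 * B := by nlinarith
    nlinarith

end RS3

open Finset

namespace RS3B

/-- bit-reversal key on `l` bits -/
def keyNat (l n : ℕ) : ℕ := ∑ q ∈ Finset.range l, ((n.testBit q).toNat * 2^(l - 1 - q))

lemma two_pow_sum (t : ℕ) : ∑ j ∈ Finset.range t, 2^j = 2^t - 1 := by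
  induction t with
  | zero => simp
  | succ t ih => rw [Finset.sum_range_succ, ih]; have := Nat.one_le_two_pow (n := t); omega

lemma keyNat_lt {l n m v : ℕ} (hn : n < 2^l) (hm : m < 2^l)
    (hlow : ∀ q < v, n.testBit q = m.testBit q)
    (hnv : n.testBit v = false) (hmv : m.testBit v = true) :
    keyNat l n < keyNat l m := by
  have hvl : v < l := by
    by_contra h
    push_neg at h
    have : m < 2^v := hm.trans_le (Nat.pow_le_pow_right (by norm_num) h)
    rw [Nat.testBit_lt_two_pow this] at hmv
    exact Bool.false_ne_true hmv
  have hsplit : ∀ x : ℕ → ℕ, ∑ q ∈ Finset.range l, x q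
      = ∑ q ∈ Finset.range v, x q + x v + ∑ q ∈ Finset.Ico (v+1) l, x q := by
    intro x
    rw [Finset.range_eq_Ico, ← Finset.sum_Ico_consecutive _ (Nat.zero_le (v+1)) hvl,
      ← Finset.range_eq_Ico, Finset.sum_range_succ]
  have htail : ∑ q ∈ Finset.Ico (v+1) l, 2^(l - 1 - q) = 2^(l-1-v) - 1 := by
    rw [← two_pow_sum (l - 1 - v)]
    apply Finset.sum_nbij' (i := fun q => l - 1 - q) (j := fun j => l - 1 - j)
    · intro a ha; simp only [Finset.mem_Ico] at ha; simp only [Finset.mem_range]; omega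
    · intro a ha; simp only [Finset.mem_range] at ha; simp only [Finset.mem_Ico]; omega
    · intro a ha; simp only [Finset.mem_Ico] at ha; omega
    · intro a ha; simp only [Finset.mem_range] at ha; omega
    · intro a ha; rfl
  have htail_le : ∑ q ∈ Finset.Ico (v+1) l, ((n.testBit q).toNat * 2^(l - 1 - q))
      ≤ 2^(l-1-v) - 1 := by
    rw [← htail]
    apply Finset.sum_le_sum
    intro q _
    calc (n.testBit q).toNat * 2^(l-1-q) ≤ 1 * 2^(l-1-q) :=
          Nat.mul_le_mul_right _ (Bool.toNat_le _)
      _ = 2^(l-1-q) := Nat.one_mul _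
  have hlows : ∑ q ∈ Finset.range v, ((n.testBit q).toNat * 2^(l - 1 - q))
      = ∑ q ∈ Finset.range v, ((m.testBit q).toNat * 2^(l - 1 - q)) := by
    apply Finset.sum_congr rfl
    intro q hq
    rw [hlow q (Finset.mem_range.mp hq)]
  rw [keyNat, keyNat, hsplit, hsplit, hlows, hnv, hmv]
  simp only [Bool.toNat_false, Bool.toNat_true, Nat.zero_mul, Nat.one_mul, Nat.add_zero]
  have h1 : 0 < 2^(l-1-v) := Nat.pow_pos (by norm_num)
  omega

lemma modeq_of_dvd {a b v : ℕ} (h : (2^v : ℤ) ∣ (a : ℤ) - b) : a % 2^v = b % 2^v := by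
  have : a ≡ b [MOD 2^v] := by
    rw [Nat.modEq_iff_dvd]
    push_cast
    have := dvd_neg.mpr h
    rw [neg_sub] at this
    exact_mod_cast this
  exact this

lemma testBit_eq_of_dvd {a b v : ℕ} (h : (2^v : ℤ) ∣ (a : ℤ) - b) :
    ∀ q < v, a.testBit q = b.testBit q := by
  intro q hq
  have hmod := modeq_of_dvd h
  have h1 : (a % 2^v).testBit q = a.testBit q := by
    rw [Nat.testBit_mod_two_pow]; simp [hq]
  have h2 : (b % 2^v).testBit q = b.testBit q := by
    rw [Nat.testBit_mod_two_pow]; simp [hq]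
  rw [← h1, ← h2, hmod]

lemma testBit_ne_of_dvd {a b v : ℕ} (h : (2^v : ℤ) ∣ (a : ℤ) - b)
    (h2 : ¬ ((2^(v+1) : ℤ) ∣ (a : ℤ) - b)) : a.testBit v ≠ b.testBit v := by
  intro heq
  apply h2
  have hmod := modeq_of_dvd h
  have hm : a % 2^(v+1) = b % 2^(v+1) := by
    rw [Nat.mod_pow_succ, Nat.mod_pow_succ, hmod]
    congr 1
    congr 1
    have ha : a.testBit v = decide (a / 2^v % 2 = 1) := Nat.testBit_eq_decide_div_mod_eq
    have hb : b.testBit v = decide (b / 2^v % 2 = 1) := Nat.testBit_eq_decide_div_mod_eq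
    rw [ha, hb] at heq
    have h2a : a / 2^v % 2 < 2 := Nat.mod_lt _ (by norm_num)
    have h2b : b / 2^v % 2 < 2 := Nat.mod_lt _ (by norm_num)
    interval_cases h : a / 2^v % 2 <;> interval_cases h' : b / 2^v % 2 <;> simp_all
  have : a ≡ b [MOD 2^(v+1)] := hm
  rw [Nat.modEq_iff_dvd] at this
  push_cast at this
  have := dvd_neg.mpr this
  rw [neg_sub] at this
  exact_mod_cast this

lemma dvd_shift {r v : ℕ} {d : ℤ} (hro : Odd r) (hd : d ≠ 0)
    (hv : v = d.natAbs.factorization 2) :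
    ((2^v : ℤ) ∣ r * d) ∧ ¬((2^(v+1) : ℤ) ∣ r * d) := by
  have hdn : d.natAbs ≠ 0 := Int.natAbs_ne_zero.mpr hd
  have h1 : (2^v : ℕ) ∣ d.natAbs := hv ▸ Nat.ordProj_dvd d.natAbs 2
  have h2 : ¬ (2^(v+1) : ℕ) ∣ d.natAbs := hv ▸ Nat.pow_succ_factorization_not_dvd hdn Nat.prime_two
  constructor
  · have : (2^v : ℤ) ∣ d := Int.dvd_natAbs.mp (by exact_mod_cast Int.natCast_dvd_natCast.mpr h1)
    exact this.mul_left _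
  · intro hdvd
    apply h2
    have : (2^(v+1) : ℕ) ∣ (r * d).natAbs := by
      have := Int.natAbs_dvd_natAbs.mpr hdvd
      simpa [Int.natAbs_pow] using this
    rw [Int.natAbs_mul, Int.natAbs_natCast] at this
    have hcop : Nat.Coprime (2^(v+1)) r :=
      Nat.Coprime.pow_left _ ((Nat.prime_two.coprime_iff_not_dvd).mpr
        (fun hdd => by have h1 := Nat.odd_iff.mp hro; have h2 := Nat.mod_eq_zero_of_dvd hdd; omega))
    exact hcop.dvd_of_dvd_mul_left this

lemma key_triple {l nx ny nz r s : ℕ} {d : ℤ} (hro : Odd r) (hso : Odd s) (hd : d ≠ 0)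
    (hxy : (ny : ℤ) - nx = r * d) (hyz : (nz : ℤ) - ny = s * d)
    (hxl : nx < 2^l) (hyl : ny < 2^l) (hzl : nz < 2^l)
    (k1 : keyNat l nx ≤ keyNat l ny) (k2 : keyNat l ny ≤ keyNat l nz) : False := by
  set v := d.natAbs.factorization 2 with hv
  obtain ⟨hr1, hr2⟩ := dvd_shift hro hd hv
  obtain ⟨hs1, hs2⟩ := dvd_shift hso hd hv
  -- pair (ny, nx)
  have hxy1 : (2^v : ℤ) ∣ (ny : ℤ) - nx := hxy ▸ hr1
  have hxy2 : ¬ (2^(v+1) : ℤ) ∣ (ny : ℤ) - nx := hxy ▸ hr2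
  have hyz1 : (2^v : ℤ) ∣ (nz : ℤ) - ny := hyz ▸ hs1
  have hyz2 : ¬ (2^(v+1) : ℤ) ∣ (nz : ℤ) - ny := hyz ▸ hs2
  have hxz1 : (2^(v+1) : ℤ) ∣ (nz : ℤ) - nx := by
    have hsum : (nz : ℤ) - nx = (r + s) * d := by push_cast; linarith
    obtain ⟨m, hm⟩ := hro.add_odd hso
    have hdv : (2^v : ℤ) ∣ d := by
      have hdn : d.natAbs ≠ 0 := Int.natAbs_ne_zero.mpr hd
      have h1 : (2^v : ℕ) ∣ d.natAbs := hv ▸ Nat.ordProj_dvd d.natAbs 2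
      exact Int.dvd_natAbs.mp (by exact_mod_cast Int.natCast_dvd_natCast.mpr h1)
    obtain ⟨e, he⟩ := hdv
    have h2m : ((r : ℤ) + s) = 2 * m := by
      have hh : r + s = m + m := hm
      have : ((r + s : ℕ) : ℤ) = ((m + m : ℕ) : ℤ) := by rw [hh]
      push_cast at this
      linarith
    rw [hsum, h2m, he]
    ring_nf
    exact ⟨m * e, by ring⟩
  have bxy := testBit_ne_of_dvd hxy1 hxy2
  have byz := testBit_ne_of_dvd hyz1 hyz2
  have bxz : nz.testBit v = nx.testBit v := testBit_eq_of_dvd hxz1 v (Nat.lt_succ_self v)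
  have lxy := testBit_eq_of_dvd hxy1
  have lyz := testBit_eq_of_dvd hyz1
  cases hbx : nx.testBit v with
  | false =>
    have hby : ny.testBit v = true := by
      cases hby : ny.testBit v
      · exact absurd (hby.trans hbx.symm) bxy
      · rfl
    have hbz : nz.testBit v = false := bxz.trans hbx
    have : keyNat l nz < keyNat l ny :=
      keyNat_lt hzl hyl (fun q hq => lyz q hq) hbz hby
    omega
  | true =>
    have hby : ny.testBit v = false := by
      cases hby : ny.testBit v
      · rfl
      · exact absurd (hby.trans hbx.symm) bxy
    have : keyNat l ny < keyNat l nx :=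
      keyNat_lt hyl hxl (fun q hq => lxy q hq) hby hbx
    omega

end RS3B

open Finset

namespace RS3

variable (r s B : ℕ)

noncomputable def Bfin (k : ℕ) : Finset ℤ :=
  Finset.Icc ((Mk r s B k : ℤ)+1) (Nk r s B k) ∪
  Finset.Icc (-(Nk r s B k : ℤ)) (-((Mk r s B k : ℤ)+1))

def keyOf (k : ℕ) (w : ℤ) : ℕ :=
  RS3B.keyNat (2 * Nk r s B k + 1) ((w + Nk r s B k).toNat)

noncomputable def blist (k : ℕ) : List ℤ :=
  (Bfin r s B k).toList.mergeSort (fun a b => decide (keyOf r s B k a ≤ keyOf r s B k b))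

noncomputable def upto : ℕ → List ℤ
  | 0 => []
  | k+1 => upto k ++ blist r s B k

noncomputable def o (k : ℕ) : ℕ := (upto r s B k).length

noncomputable def fseq (i : ℕ) : ℤ := (upto r s B (i+1)).getD i 0

def Sset : Set ℤ := ⋃ k, (Bfin r s B k : Set ℤ)

variable {r s B}
variable (hr : 0 < r) (hs : 0 < s) (hB : r * r + r + s + 1 ≤ B)

lemma mem_Bfin {k : ℕ} {w : ℤ} :
    w ∈ Bfin r s B k ↔ (Mk r s B k : ℤ) + 1 ≤ |w| ∧ |w| ≤ (Nk r s B k : ℤ) := by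
  simp only [Bfin, Finset.mem_union, Finset.mem_Icc]
  have h0 : (0:ℤ) ≤ (Mk r s B k : ℤ) := Int.natCast_nonneg _
  constructor
  · rintro (⟨h1, h2⟩ | ⟨h1, h2⟩)
    · rw [abs_of_pos (by omega)]; exact ⟨h1, h2⟩
    · rw [abs_of_neg (by omega)]; constructor <;> omega
  · intro ⟨h1, h2⟩
    rcases le_or_gt 0 w with h | h
    · left; rw [abs_of_nonneg h] at h1 h2; exact ⟨h1, h2⟩
    · right; rw [abs_of_neg h] at h1 h2; constructor <;> omega

lemma card_Bfin (k : ℕ) : (Bfin r s B k).card = 2 * W r s B k := by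
  have hMN := M_le_N (r := r) (s := s) (B := B) k
  rw [Bfin, Finset.card_union_of_disjoint]
  · rw [Int.card_Icc, Int.card_Icc]
    have : ((Nk r s B k : ℤ) + 1 - ((Mk r s B k : ℤ) + 1)).toNat = W r s B k := by
      simp only [W]; omega
    rw [this]
    have : (-((Mk r s B k : ℤ) + 1) + 1 - -(Nk r s B k : ℤ)).toNat = W r s B k := by
      simp only [W]; omega
    rw [this]; ring
  · rw [Finset.disjoint_left]
    intro a ha ha'
    simp only [Finset.mem_Icc] at ha ha'
    omega

include hr hs hB in
lemma card_Bfin_pos (k : ℕ) : 0 < (Bfin r s B k).card := by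
  rw [card_Bfin]; have := W_pos hr hs hB (k := k); omega

include hr in
lemma Bfin_disj {j k : ℕ} (hjk : j < k) : Disjoint (Bfin r s B j) (Bfin r s B k) := by
  rw [Finset.disjoint_left]
  intro w hw hw'
  rw [mem_Bfin] at hw hw'
  have h1 : Nk r s B j ≤ Nk r s B (k-1) := N_mono hr (by omega)
  have h2 := N_lt_M_succ hr (s := s) (B := B) (k-1)
  have h3 : k - 1 + 1 = k := by omega
  rw [h3] at h2
  have : (Nk r s B j : ℤ) < (Mk r s B k : ℤ) + 1 := by exact_mod_cast by omega
  linarith [hw.1, hw.2, hw'.1, hw'.2]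

lemma blist_perm (k : ℕ) : (blist r s B k).Perm (Bfin r s B k).toList :=
  List.mergeSort_perm _ _

lemma mem_blist {k : ℕ} {w : ℤ} : w ∈ blist r s B k ↔ w ∈ Bfin r s B k := by
  rw [(blist_perm k).mem_iff, Finset.mem_toList]

lemma blist_nodup (k : ℕ) : (blist r s B k).Nodup :=
  (blist_perm k).nodup_iff.mpr (Finset.nodup_toList _)

lemma blist_length (k : ℕ) : (blist r s B k).length = (Bfin r s B k).card := by
  rw [(blist_perm k).length_eq, Finset.length_toList]

lemma blist_sorted (k : ℕ) :
    List.Pairwise (fun a b => keyOf r s B k a ≤ keyOf r s B k b) (blist r s B k) := by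
  have := List.pairwise_mergeSort
    (le := fun a b => decide (keyOf r s B k a ≤ keyOf r s B k b))
    (fun a b c hab hbc => by
      simp only [decide_eq_true_eq] at *; omega)
    (fun a b => by simp only [decide_eq_true_eq, Bool.or_eq_true]; omega)
    (Bfin r s B k).toList
  exact this.imp (fun h => by simpa using h)

lemma upto_succ (k : ℕ) : upto r s B (k+1) = upto r s B k ++ blist r s B k := rfl

lemma o_zero : o r s B 0 = 0 := rfl

lemma o_succ (k : ℕ) : o r s B (k+1) = o r s B k + (Bfin r s B k).card := by
  simp [o, upto_succ, blist_length]

include hr hs hB in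
lemma o_lt_succ (k : ℕ) : o r s B k < o r s B (k+1) := by
  rw [o_succ]; have := card_Bfin_pos hr hs hB k; omega

include hr hs hB in
lemma le_o (k : ℕ) : k ≤ o r s B k := by
  induction k with
  | zero => omega
  | succ k ih => have := o_lt_succ hr hs hB k; omega

include hr hs hB in
lemma o_mono : Monotone (o r s B) := by
  apply monotone_nat_of_le_succ
  intro k
  exact (o_lt_succ hr hs hB k).le

include hr hs hB in
lemma getD_stable {m k i : ℕ} (hmk : m ≤ k) (hi : i < o r s B m) :
    (upto r s B k).getD i 0 = (upto r s B m).getD i 0 := by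
  induction k with
  | zero =>
    have hm0 : m = 0 := Nat.le_zero.mp hmk
    rw [hm0]
  | succ k ih =>
    rcases Nat.lt_or_ge m (k+1) with h | h
    · have hmk' : m ≤ k := by omega
      have : i < (upto r s B k).length := lt_of_lt_of_le hi (o_mono hr hs hB hmk')
      rw [upto_succ, List.getD_append _ _ _ _ this]
      exact ih hmk'
    · have : m = k + 1 := by omega
      rw [this]

include hr hs hB in
lemma fseq_eq {m i : ℕ} (hi : i < o r s B m) : fseq r s B i = (upto r s B m).getD i 0 := by
  have hio : i < o r s B (i+1) := lt_of_lt_of_le (Nat.lt_succ_self i) (le_o hr hs hB (i+1))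
  show (upto r s B (i+1)).getD i 0 = (upto r s B m).getD i 0
  rcases le_total m (i+1) with h | h
  · exact getD_stable hr hs hB h hi
  · exact (getD_stable hr hs hB h hio).symm

variable (r s B)

noncomputable def blk (i : ℕ) : ℕ := Nat.findGreatest (fun k => o r s B k ≤ i) i

variable {r s B}

include hr hs hB in
lemma blk_spec (i : ℕ) : o r s B (blk r s B i) ≤ i ∧ i < o r s B (blk r s B i + 1) := by
  have h1 : o r s B (blk r s B i) ≤ i :=
    Nat.findGreatest_spec (P := fun k => o r s B k ≤ i) (Nat.zero_le i) (by show o r s B 0 ≤ i; rw [o_zero]; omega)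
  refine ⟨h1, ?_⟩
  by_contra h
  push_neg at h
  exact Nat.findGreatest_is_greatest (P := fun k => o r s B k ≤ i)
      (Nat.lt_succ_self _) ((le_o hr hs hB _).trans h) h

lemma blk_mono {i j : ℕ} (hij : i ≤ j) : blk r s B i ≤ blk r s B j :=
  Nat.findGreatest_mono (fun _ h => h.trans hij) hij

include hr hs hB in
lemma fseq_getD (i : ℕ) :
    i - o r s B (blk r s B i) < (blist r s B (blk r s B i)).length ∧
      fseq r s B i = (blist r s B (blk r s B i)).getD (i - o r s B (blk r s B i)) 0 := by
  obtain ⟨h1, h2⟩ := blk_spec hr hs hB i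
  set b := blk r s B i with hb
  have hlen : o r s B (b+1) = o r s B b + (blist r s B b).length := by
    rw [o_succ, blist_length]
  have hlt : i - o r s B b < (blist r s B b).length := by omega
  refine ⟨hlt, ?_⟩
  have heq := fseq_eq hr hs hB (m := b+1) (i := i) h2
  rw [heq, upto_succ]
  have hfull : i < ((upto r s B b) ++ blist r s B b).length := by
    rw [List.length_append]
    have : (upto r s B b).length = o r s B b := rfl
    omega
  rw [List.getD_eq_getElem _ _ hfull]
  rw [List.getElem_append_right (show (upto r s B b).length ≤ i from h1)]
  rw [List.getD_eq_getElem _ _ hlt]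
  rfl

include hr hs hB in
lemma fseq_mem_blk (i : ℕ) : fseq r s B i ∈ Bfin r s B (blk r s B i) := by
  obtain ⟨h, hget⟩ := fseq_getD hr hs hB i
  rw [hget, List.getD_eq_getElem _ _ h]
  exact mem_blist.mp (List.getElem_mem h)

include hr hs hB in
lemma fseq_key_order {i j : ℕ} (hij : i < j) (hblk : blk r s B i = blk r s B j) :
    keyOf r s B (blk r s B i) (fseq r s B i) ≤ keyOf r s B (blk r s B i) (fseq r s B j) := by
  obtain ⟨h1i, h2i⟩ := blk_spec hr hs hB i
  obtain ⟨h1j, h2j⟩ := blk_spec hr hs hB j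
  obtain ⟨hi, hgi⟩ := fseq_getD hr hs hB i
  obtain ⟨hj, hgj⟩ := fseq_getD hr hs hB j
  rw [← hblk] at h1j hj hgj
  have hsorted := blist_sorted (r := r) (s := s) (B := B) (blk r s B i)
  rw [List.pairwise_iff_get] at hsorted
  have hkey := hsorted ⟨i - o r s B (blk r s B i), hi⟩ ⟨j - o r s B (blk r s B i), hj⟩
    (by simp only [Fin.mk_lt_mk]; omega)
  rw [List.get_eq_getElem, List.get_eq_getElem] at hkey
  rw [hgi, hgj, List.getD_eq_getElem _ _ hi, List.getD_eq_getElem _ _ hj]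
  exact hkey

include hr hs hB in
lemma fseq_injective : Function.Injective (fseq r s B) := by
  intro i j hij
  by_contra hne
  wlog hlt : i < j generalizing i j
  · exact this hij.symm (Ne.symm hne) (by omega)
  have hjlen : j < o r s B (j+1) := lt_of_lt_of_le (Nat.lt_succ_self j) (le_o hr hs hB (j+1))
  have hilen : i < o r s B (j+1) := hlt.trans hjlen
  have hfi := fseq_eq hr hs hB (m := j+1) hilen
  have hfj := fseq_eq hr hs hB (m := j+1) hjlen
  have hnodup : (upto r s B (j+1)).Nodup := by
    clear hij hfi hfj hne hilen hjlen hlt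
    induction j+1 with
    | zero => exact List.nodup_nil
    | succ k ih =>
      rw [upto_succ]
      apply List.Nodup.append ih (blist_nodup k)
      intro w hw hw'
      -- w in earlier blocks and in block k
      have hwS : ∃ m < k, w ∈ Bfin r s B m := by
        clear ih hw'
        induction k with
        | zero => simp [upto] at hw
        | succ k ih2 =>
          rw [upto_succ, List.mem_append] at hw
          rcases hw with hw | hw
          · obtain ⟨m, hm, hmem⟩ := ih2 hw
            exact ⟨m, by omega, hmem⟩
          · exact ⟨k, by omega, mem_blist.mp hw⟩
      obtain ⟨m, hm, hmem⟩ := hwS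
      have hdisj := Bfin_disj hr (s := s) (B := B) hm
      rw [Finset.disjoint_left] at hdisj
      exact hdisj hmem (mem_blist.mp hw')
  rw [hfi, hfj] at hij
  have hil : i < (upto r s B (j+1)).length := hilen
  have hjl : j < (upto r s B (j+1)).length := hjlen
  rw [List.getD_eq_getElem _ _ hil, List.getD_eq_getElem _ _ hjl] at hij
  exact absurd (hnodup.getElem_inj_iff.mp hij) (by omega)

include hr hs hB in
lemma fseq_range : Set.range (fseq r s B) = Sset r s B := by
  ext w
  constructor
  · rintro ⟨i, rfl⟩
    exact Set.mem_iUnion.mpr ⟨blk r s B i, fseq_mem_blk hr hs hB i⟩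
  · intro hw
    obtain ⟨k, hk⟩ := Set.mem_iUnion.mp hw
    have hk' : w ∈ blist r s B k := mem_blist.mpr hk
    obtain ⟨p, hp⟩ := List.get_of_mem hk'
    have hup : w ∈ upto r s B (k+1) := by
      rw [upto_succ, List.mem_append]; right; exact hk'
    obtain ⟨q, hq⟩ := List.get_of_mem hup
    refine ⟨q.val, ?_⟩
    have hql : (q : ℕ) < o r s B (k+1) := q.isLt
    have heq := fseq_eq hr hs hB (m := k+1) hql
    rw [heq, List.getD_eq_getElem _ _ q.isLt, ← List.get_eq_getElem]
    exact hq

end RS3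

open Finset

namespace RS3

variable {r s B : ℕ}
variable (hr : 0 < r) (hs : 0 < s) (hB : r * r + r + s + 1 ≤ B)

include hr in
lemma abs_le_of_earlier {j c : ℕ} (hjc : j < c) {w : ℤ} (hw : w ∈ Bfin r s B j) :
    |w| ≤ (Nk r s B (c-1) : ℤ) := by
  have h := (mem_Bfin.mp hw).2
  have : Nk r s B j ≤ Nk r s B (c-1) := N_mono hr (by omega)
  exact h.trans (by exact_mod_cast this)

include hr in
lemma case_far {c : ℕ} (hc : 0 < c) {x y z d : ℤ} (hd : d ≠ 0)
    (hxe : |x| ≤ (Nk r s B (c-1) : ℤ)) (hye : |y| ≤ (Nk r s B (c-1) : ℤ))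
    (hze : (Mk r s B c : ℤ) + 1 ≤ |z|)
    (hxy : y = x + r * d) (hyz : z = y + s * d) : False := by
  have hF2 := F2 hr (s := s) (B := B) (c-1)
  have hc1 : c - 1 + 1 = c := by omega
  rw [hc1] at hF2
  have hF2' : ((r:ℤ) + 2*s) * (Nk r s B (c-1) : ℤ) < r * Mk r s B c := by exact_mod_cast hF2
  set e := (Nk r s B (c-1) : ℤ)
  have habs : (r:ℤ) * |z - y| = s * |y - x| := by
    have h1 : z - y = s * d := by linarith
    have h2 : y - x = r * d := by linarith
    rw [h1, h2, abs_mul, abs_mul, Int.abs_natCast, Int.abs_natCast]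
    ring
  have h1 : |z| - |y| ≤ |z - y| := abs_sub_abs_le_abs_sub _ _
  have h2 : |y - x| ≤ |y| + |x| := abs_sub _ _
  have hrp : (0:ℤ) < r := by exact_mod_cast hr
  have hsp : (0:ℤ) ≤ s := by positivity
  have e1 : (r:ℤ) * (|z| - |y|) ≤ r * |z - y| := mul_le_mul_of_nonneg_left h1 hrp.le
  have e2 : (s:ℤ) * |y - x| ≤ s * (|y| + |x|) := mul_le_mul_of_nonneg_left h2 hsp
  have e3 : (r:ℤ) * ((Mk r s B c : ℤ) + 1) ≤ r * |z| := mul_le_mul_of_nonneg_left hze hrp.le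
  have e4 : (r:ℤ) * |y| ≤ r * e := mul_le_mul_of_nonneg_left hye hrp.le
  have e5 : (s:ℤ) * (|y| + |x|) ≤ s * (e + e) := mul_le_mul_of_nonneg_left (by linarith) hsp
  nlinarith [habs]

include hr hs in
lemma case_mid {c : ℕ} (hc : 0 < c) {x y z d : ℤ} (hd : d ≠ 0)
    (hxe : |x| ≤ (Nk r s B (c-1) : ℤ))
    (hy : y ∈ Bfin r s B c) (hz : z ∈ Bfin r s B c)
    (hxy : y = x + r * d) (hyz : z = y + s * d) : False := by
  have hc1 : c - 1 + 1 = c := by omega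
  have hF3 := F3 (r := r) (s := s) (B := B) (c-1)
  rw [hc1] at hF3
  have hMN := M_le_N (r := r) (s := s) (B := B) c
  have hNM := N_lt_M_succ hr (s := s) (B := B) (c-1)
  rw [hc1] at hNM
  -- cast facts
  have hF3' : (r:ℤ) * ((Nk r s B c : ℤ) - Mk r s B c) ≤ s * ((Mk r s B c : ℤ) - Nk r s B (c-1)) := by
    have h := hF3
    zify [hNM.le, hMN] at h
    linarith
  have hNM' : (Nk r s B (c-1) : ℤ) < (Mk r s B c : ℤ) := by exact_mod_cast hNM
  obtain ⟨hy1, hy2⟩ := mem_Bfin.mp hy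
  obtain ⟨hz1, hz2⟩ := mem_Bfin.mp hz
  have hrp : (0:ℤ) < r := by exact_mod_cast hr
  have hsp : (0:ℤ) < s := by exact_mod_cast hs
  rcases lt_trichotomy z y with hzy | hzy | hzy
  · -- z < y, so s*d < 0, d < 0, x > y
    have hdneg : d < 0 := by
      by_contra hcon
      push_neg at hcon
      have : (0:ℤ) ≤ s * d := mul_nonneg hsp.le hcon
      linarith
    have hxgty : x > y := by
      have : (r:ℤ) * d < 0 := mul_neg_of_pos_of_neg hrp hdneg
      linarith
    rcases le_or_gt 0 y with hy0 | hy0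
    · -- y positive: x > y ≥ M_c + 1, contradict |x| ≤ e < M_c+1
      rw [abs_of_nonneg hy0] at hy1
      have : |x| ≥ x := le_abs_self x
      linarith
    · -- y negative: y ≤ -(M+1); z < y so z negative part: z ≥ -N_c
      rw [abs_of_neg hy0] at hy1 hy2
      have hz0 : z < 0 := by linarith
      rw [abs_of_neg hz0] at hz1 hz2
      -- y - z ≤ N - M - 1 ; x - y ≥ M+1-e ; r(y-z) = s(x-y)
      have hkey : (r:ℤ) * (y - z) = s * (x - y) := by
        linear_combination (s:ℤ) * hxy - (r:ℤ) * hyz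
      have h1 : y - z ≤ (Nk r s B c : ℤ) - (Mk r s B c : ℤ) - 1 := by linarith
      have h2 : x - y ≥ (Mk r s B c : ℤ) + 1 - Nk r s B (c-1) := by
        have : x ≥ -|x| := neg_abs_le x
        linarith
      have e1 : (r:ℤ) * (y - z) ≤ r * ((Nk r s B c : ℤ) - Mk r s B c - 1) :=
        mul_le_mul_of_nonneg_left h1 hrp.le
      have e2 : (s:ℤ) * ((Mk r s B c : ℤ) + 1 - Nk r s B (c-1)) ≤ s * (x - y) :=
        mul_le_mul_of_nonneg_left h2 hsp.le
      nlinarith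
  · -- z = y impossible
    apply hd
    have : (s:ℤ) * d = 0 := by linarith
    rcases mul_eq_zero.mp this with h | h
    · exact absurd h (by positivity)
    · exact h
  · -- z > y : s*d > 0, d > 0, x < y
    have hdpos : d > 0 := by
      by_contra hcon
      push_neg at hcon
      have : (s:ℤ) * d ≤ 0 := mul_nonpos_of_nonneg_of_nonpos hsp.le hcon
      linarith
    have hxlty : x < y := by
      have : (0:ℤ) < r * d := mul_pos hrp hdpos
      linarith
    rcases le_or_gt 0 y with hy0 | hy0
    · rw [abs_of_nonneg hy0] at hy1 hy2
      have hz0 : 0 < z := by linarith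
      rw [abs_of_pos hz0] at hz1 hz2
      have hkey : (r:ℤ) * (z - y) = s * (y - x) := by
        linear_combination (r:ℤ) * hyz - (s:ℤ) * hxy
      have h1 : z - y ≤ (Nk r s B c : ℤ) - (Mk r s B c : ℤ) - 1 := by linarith
      have h2 : y - x ≥ (Mk r s B c : ℤ) + 1 - Nk r s B (c-1) := by
        have : x ≤ |x| := le_abs_self x
        linarith
      have e1 : (r:ℤ) * (z - y) ≤ r * ((Nk r s B c : ℤ) - Mk r s B c - 1) :=
        mul_le_mul_of_nonneg_left h1 hrp.le
      have e2 : (s:ℤ) * ((Mk r s B c : ℤ) + 1 - Nk r s B (c-1)) ≤ s * (y - x) :=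
        mul_le_mul_of_nonneg_left h2 hsp.le
      nlinarith
    · rw [abs_of_neg hy0] at hy1
      have hax : -x ≤ |x| := neg_abs_le x |> fun h => by linarith [neg_abs_le x]
      linarith

lemma case_same (hro : Odd r) (hso : Odd s) {c : ℕ} {x y z d : ℤ} (hd : d ≠ 0)
    (hx : x ∈ Bfin r s B c) (hy : y ∈ Bfin r s B c) (hz : z ∈ Bfin r s B c)
    (hxy : y = x + r * d) (hyz : z = y + s * d)
    (k1 : keyOf r s B c x ≤ keyOf r s B c y) (k2 : keyOf r s B c y ≤ keyOf r s B c z) :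
    False := by
  set N := Nk r s B c
  have hxb := (mem_Bfin.mp hx).2
  have hyb := (mem_Bfin.mp hy).2
  have hzb := (mem_Bfin.mp hz).2
  have hxN : -(N:ℤ) ≤ x ∧ x ≤ N := abs_le.mp hxb
  have hyN : -(N:ℤ) ≤ y ∧ y ≤ N := abs_le.mp hyb
  have hzN : -(N:ℤ) ≤ z ∧ z ≤ N := abs_le.mp hzb
  set nx := (x + N).toNat
  set ny := (y + N).toNat
  set nz := (z + N).toNat
  have hnx : (nx : ℤ) = x + N := Int.toNat_of_nonneg (by linarith [hxN.1])
  have hny : (ny : ℤ) = y + N := Int.toNat_of_nonneg (by linarith [hyN.1])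
  have hnz : (nz : ℤ) = z + N := Int.toNat_of_nonneg (by linarith [hzN.1])
  have hub : ∀ w : ℤ, w ≤ N → ∀ n : ℕ, (n:ℤ) = w + N → n < 2^(2*N+1) := by
    intro w hw n hn
    have h1 : n ≤ 2*N := by omega
    calc n ≤ 2*N := h1
      _ < 2^(2*N) := Nat.lt_two_pow_self
      _ < 2^(2*N+1) := Nat.pow_lt_pow_right (by norm_num) (Nat.lt_succ_self _)
  refine RS3B.key_triple (l := 2*N+1) (r := r) (s := s) (d := d) hro hso hd
    (by rw [hny, hnx]; linarith) (by rw [hnz, hny]; linarith)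
    (hub x hxN.2 nx hnx) (hub y hyN.2 ny hny) (hub z hzN.2 nz hnz) k1 k2

include hr hs hB in
theorem avoid (hro : Odd r) (hso : Odd s) :
    ¬ ∃ (i₁ i₂ i₃ : ℕ) (d : ℤ), i₁ < i₂ ∧ i₂ < i₃ ∧ d ≠ 0 ∧
      fseq r s B i₂ = fseq r s B i₁ + r * d ∧ fseq r s B i₃ = fseq r s B i₂ + s * d := by
  rintro ⟨i1, i2, i3, d, h12, h23, hd, hxy, hyz⟩
  set x := fseq r s B i1
  set y := fseq r s B i2
  set z := fseq r s B i3
  have hb12 : blk r s B i1 ≤ blk r s B i2 := blk_mono h12.le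
  have hb23 : blk r s B i2 ≤ blk r s B i3 := blk_mono h23.le
  have hx := fseq_mem_blk hr hs hB i1
  have hy := fseq_mem_blk hr hs hB i2
  have hz := fseq_mem_blk hr hs hB i3
  rcases lt_or_eq_of_le hb23 with hlt | heq23
  · -- b2 < b3 : far case
    exact case_far hr (c := blk r s B i3) (by omega) hd
      (abs_le_of_earlier hr (by omega) hx)
      (abs_le_of_earlier hr hlt hy)
      ((mem_Bfin.mp hz).1) hxy hyz
  · rcases lt_or_eq_of_le hb12 with hlt | heq12
    · -- b1 < b2 = b3 : mid case
      rw [← heq23] at hz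
      exact case_mid hr hs (c := blk r s B i2) (by omega) hd
        (abs_le_of_earlier hr hlt hx) hy hz hxy hyz
    · -- all same
      have e2 : blk r s B i2 = blk r s B i1 := heq12.symm
      have e3 : blk r s B i3 = blk r s B i1 := by rw [← heq23, ← heq12]
      have k1 := fseq_key_order hr hs hB h12 heq12
      have k2 := fseq_key_order hr hs hB h23 heq23
      rw [e2] at k2 hy
      rw [e3] at hz
      exact case_same hro hso hd hx hy hz hxy hyz k1 k2

end RS3

open Finset

namespace RS3

variable {r s B : ℕ}
variable (hr : 0 < r) (hs : 0 < s) (hB : r * r + r + s + 1 ≤ B)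

lemma ncard_SIcc_le (n : ℕ) :
    (Sset r s B ∩ Set.Icc (-(n:ℤ)) n).ncard ≤ 2 * n + 1 := by
  have hsub : Sset r s B ∩ Set.Icc (-(n:ℤ)) n ⊆ ↑(Finset.Icc (-(n:ℤ)) n) := by
    rw [Finset.coe_Icc]; exact Set.inter_subset_right
  have := Set.ncard_le_ncard hsub (Finset.Icc (-(n:ℤ)) n).finite_toSet
  rw [Set.ncard_coe_finset, Int.card_Icc] at this
  omega

lemma SIcc_finite (n : ℕ) : (Sset r s B ∩ Set.Icc (-(n:ℤ)) n).Finite :=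
  (Set.finite_Icc _ _).subset Set.inter_subset_right

include hr in
lemma count_lower {k n : ℕ} (hn1 : Nk r s B k ≤ n) (hn2 : n ≤ Nk r s B (k+1)) :
    2 * C r s B k + 2 * (n - Mk r s B (k+1)) ≤
      (Sset r s B ∩ Set.Icc (-(n:ℤ)) n).ncard := by
  classical
  set M1 := Mk r s B (k+1) with hM1
  set bigF : Finset ℤ := (Finset.range (k+1)).biUnion (fun j => Bfin r s B j) with hbigF
  set extra : Finset ℤ :=
    Finset.Icc ((M1:ℤ)+1) n ∪ Finset.Icc (-(n:ℤ)) (-((M1:ℤ)+1)) with hextra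
  have hNM : Nk r s B k < M1 := N_lt_M_succ hr k
  -- cards
  have hcard_big : bigF.card = 2 * C r s B k := by
    rw [hbigF, Finset.card_biUnion]
    · rw [C, Finset.mul_sum]
      exact Finset.sum_congr rfl (fun j _ => card_Bfin j)
    · intro a _ b _ hab
      rcases Nat.lt_or_ge a b with h | h
      · exact Bfin_disj hr h
      · exact (Bfin_disj hr (by omega)).symm
  have hcard_extra : extra.card = 2 * (n - M1) := by
    rw [hextra, Finset.card_union_of_disjoint]
    · rw [Int.card_Icc, Int.card_Icc]
      have e1 : ((n:ℤ) + 1 - ((M1:ℤ)+1)).toNat = n - M1 := by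
        rw [show (n:ℤ) + 1 - ((M1:ℤ)+1) = (n:ℤ) - (M1:ℤ) by ring, Int.toNat_sub]
      have e2 : (-((M1:ℤ)+1) + 1 - -(n:ℤ)).toNat = n - M1 := by
        rw [show -((M1:ℤ)+1) + 1 - -(n:ℤ) = (n:ℤ) - (M1:ℤ) by ring, Int.toNat_sub]
      omega
    · rw [Finset.disjoint_left]
      intro w hw hw'
      simp only [Finset.mem_Icc] at hw hw'
      omega
  -- disjoint big/extra
  have hdisj : Disjoint bigF extra := by
    rw [Finset.disjoint_left]
    intro w hw hw'
    rw [hbigF, Finset.mem_biUnion] at hw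
    obtain ⟨j, hj, hjw⟩ := hw
    have hwa := (mem_Bfin.mp hjw).2
    have hNj : (Nk r s B j : ℤ) ≤ (Nk r s B k : ℤ) := by
      exact_mod_cast N_mono hr (Nat.lt_succ_iff.mp (Finset.mem_range.mp hj))
    rw [hextra, Finset.mem_union, Finset.mem_Icc, Finset.mem_Icc] at hw'
    have habs : (M1:ℤ) + 1 ≤ |w| := by
      have ha := le_abs_self w
      have hb := neg_abs_le w
      rcases hw' with ⟨h1, _⟩ | ⟨_, h2⟩ <;> omega
    have : (Nk r s B k : ℤ) < (M1:ℤ) := by exact_mod_cast hNM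
    linarith
  -- subset
  have hsub : ↑(bigF ∪ extra) ⊆ Sset r s B ∩ Set.Icc (-(n:ℤ)) n := by
    intro w hw
    rw [Finset.coe_union, Set.mem_union] at hw
    rcases hw with hw | hw
    · rw [Finset.mem_coe, hbigF, Finset.mem_biUnion] at hw
      obtain ⟨j, hj, hjw⟩ := hw
      refine ⟨Set.mem_iUnion.mpr ⟨j, hjw⟩, ?_⟩
      have hwa := (mem_Bfin.mp hjw).2
      have hNj : (Nk r s B j : ℤ) ≤ (n : ℤ) := by
        exact_mod_cast le_trans (N_mono hr (Nat.lt_succ_iff.mp (Finset.mem_range.mp hj))) hn1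
      rw [Set.mem_Icc]
      constructor
      · have := neg_abs_le w; linarith
      · exact (le_abs_self w).trans (hwa.trans hNj)
    · rw [Finset.mem_coe, hextra, Finset.mem_union, Finset.mem_Icc, Finset.mem_Icc] at hw
      have hM0 : (0:ℤ) ≤ (M1:ℤ) := Int.natCast_nonneg _
      have hmem : w ∈ Bfin r s B (k+1) := by
        rw [mem_Bfin]
        have hn2' : (n : ℤ) ≤ (Nk r s B (k+1) : ℤ) := by exact_mod_cast hn2
        rcases hw with ⟨h1, h2⟩ | ⟨h1, h2⟩
        · rw [abs_of_pos (by omega)]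
          constructor <;> omega
        · rw [abs_of_neg (by omega)]
          constructor <;> omega
      refine ⟨Set.mem_iUnion.mpr ⟨k+1, hmem⟩, ?_⟩
      rw [Set.mem_Icc]
      rcases hw with ⟨h1, h2⟩ | ⟨h1, h2⟩ <;> constructor <;> omega
  have hkey := Set.ncard_le_ncard hsub (SIcc_finite n)
  rw [Set.ncard_coe_finset, Finset.card_union_of_disjoint hdisj, hcard_big, hcard_extra] at hkey
  exact hkey

include hr hs hB in
lemma N_ge_add (k : ℕ) : B + k ≤ Nk r s B k := by
  induction k with
  | zero => simp [N_zero]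
  | succ k ih =>
    have hlt : Nk r s B k < Nk r s B (k+1) := N_strictMono hr (s := s) (B := B) (Nat.lt_succ_self k)
    omega

include hr hs hB in
lemma exists_window {n : ℕ} (hn : B ≤ n) :
    ∃ k, Nk r s B k ≤ n ∧ n < Nk r s B (k+1) := by
  refine ⟨Nat.findGreatest (fun k => Nk r s B k ≤ n) n, ?_, ?_⟩
  · exact Nat.findGreatest_spec (P := fun k => Nk r s B k ≤ n) (Nat.zero_le n)
      (by show Nk r s B 0 ≤ n; rw [N_zero]; omega)
  · by_contra h
    push_neg at h
    exact Nat.findGreatest_is_greatest (P := fun k => Nk r s B k ≤ n)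
      (Nat.lt_succ_self _) (by
        have := N_ge_add hr hs hB (Nat.findGreatest (fun k => Nk r s B k ≤ n) n + 1)
        omega) h

end RS3

open Finset Filter

namespace RS3

variable {r s B : ℕ} {ε : ℝ}
variable (hr : 0 < r) (hs : 0 < s) (hB : r * r + r + s + 1 ≤ B)
  (hε : 0 < ε) (hεB : 2*(r:ℝ) + 2 ≤ ε * B)

include hr hs hB hε hεB in
lemma eps_bound (k : ℕ) : 2*(k:ℝ) + 3 ≤ ε * (2 * (Nk r s B k : ℝ) + 1) := by
  have hg : (r:ℝ) * B + 2*B*k ≤ r * Nk r s B k := by exact_mod_cast N_growth hr hs hB k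
  have hrp : (1:ℝ) ≤ r := by exact_mod_cast hr
  have hkp : (0:ℝ) ≤ k := Nat.cast_nonneg k
  have hBp : (0:ℝ) ≤ B := Nat.cast_nonneg B
  have key : (2*(k:ℝ) + 3) * r ≤ (ε * (2 * (Nk r s B k : ℝ) + 1)) * r := by
    have h1 : ε * (2 * (Nk r s B k : ℝ) + 1) * r = ε * (2 * ((r:ℝ) * Nk r s B k) + r) := by
      ring
    rw [h1]
    have h2 : ε * (2 * ((r:ℝ)*B + 2*B*k) + r) ≤ ε * (2 * ((r:ℝ) * Nk r s B k) + r) := by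
      apply mul_le_mul_of_nonneg_left _ hε.le
      linarith
    refine le_trans ?_ h2
    have h3 : ε * (2 * ((r:ℝ)*B + 2*B*k) + r) = 2*(ε*B)*r + 4*(ε*B)*k + ε*r := by ring
    rw [h3]
    have h4 : 2*(ε*B)*r ≥ 2*(2*(r:ℝ)+2)*r := by nlinarith
    have h5 : 4*(ε*B)*k ≥ 4*(2*(r:ℝ)+2)*k := by nlinarith
    have h6 : ε * r ≥ 0 := by positivity
    nlinarith
  have hrp' : (0:ℝ) < r := by linarith
  exact le_of_mul_le_mul_right key hrp'

include hr hs hB hε hεB in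
lemma limsup_step (k : ℕ) :
    ((s:ℝ)/((r:ℝ)+s) - ε) * (2 * (Nk r s B k : ℝ) + 1) ≤ 2 * (C r s B k : ℝ) := by
  set t := (s:ℝ)/((r:ℝ)+s)
  rcases le_or_gt (t - ε) 0 with h | h
  · have h1 : (0:ℝ) ≤ 2 * (Nk r s B k : ℝ) + 1 := by positivity
    have h2 : (0:ℝ) ≤ 2 * (C r s B k : ℝ) := by positivity
    nlinarith
  · have hC : (s:ℝ) * Nk r s B k ≤ ((r:ℝ)+s) * C r s B k + r * k := by
      exact_mod_cast C_invariant hr (s := s) (B := B) k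
    have heps := eps_bound hr hs hB hε hεB k
    have hQ : (0:ℝ) < (r:ℝ) + s := by positivity
    rw [← mul_le_mul_iff_of_pos_right hQ]
    have htQ : t * ((r:ℝ)+s) = s := div_mul_cancel₀ _ hQ.ne'
    have expand : (t - ε) * (2 * (Nk r s B k : ℝ) + 1) * ((r:ℝ)+s)
        = (t*((r:ℝ)+s)) * (2 * (Nk r s B k : ℝ) + 1)
          - (ε * (2 * (Nk r s B k : ℝ) + 1)) * ((r:ℝ)+s) := by ring
    rw [expand, htQ]
    have h3 : (ε * (2 * (Nk r s B k : ℝ) + 1)) * ((r:ℝ)+s) ≥ (2*(k:ℝ)+3) * ((r:ℝ)+s) :=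
      mul_le_mul_of_nonneg_right heps hQ.le
    have hrp : (1:ℝ) ≤ r := by exact_mod_cast hr
    have hsp : (1:ℝ) ≤ s := by exact_mod_cast hs
    have hkp : (0:ℝ) ≤ k := Nat.cast_nonneg k
    nlinarith

include hr hs hB hε hεB in
lemma liminf_step (k : ℕ) :
    ((r:ℝ)*s/(((r:ℝ)+s)*((r:ℝ)+2*s)) - ε) * (2 * (Mk r s B (k+1) : ℝ) + 1)
      ≤ 2 * (C r s B k : ℝ) := by
  set u := (r:ℝ)*s/(((r:ℝ)+s)*((r:ℝ)+2*s))
  rcases le_or_gt (u - ε) 0 with h | h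
  · have h1 : (0:ℝ) ≤ 2 * (Mk r s B (k+1) : ℝ) + 1 := by positivity
    have h2 : (0:ℝ) ≤ 2 * (C r s B k : ℝ) := by positivity
    nlinarith
  · have hC : (s:ℝ) * Nk r s B k ≤ ((r:ℝ)+s) * C r s B k + r * k := by
      exact_mod_cast C_invariant hr (s := s) (B := B) k
    have hM : (r:ℝ) * s * Mk r s B (k+1) ≤ s * ((r:ℝ)+2*s) * Nk r s B k + r * s := by
      have := M_upper (r := r) (s := s) (B := B) k
      exact_mod_cast this
    have heps := eps_bound hr hs hB hε hεB k
    have hNM : (Nk r s B k : ℝ) ≤ (Mk r s B (k+1) : ℝ) := by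
      exact_mod_cast (N_lt_M_succ hr (s := s) (B := B) k).le
    have hepsM : (2*(k:ℝ)+3) ≤ ε * (2 * (Mk r s B (k+1) : ℝ) + 1) := by
      refine le_trans heps (mul_le_mul_of_nonneg_left (by linarith) hε.le)
    have hQ : (0:ℝ) < ((r:ℝ)+s)*((r:ℝ)+2*s) := by positivity
    rw [← mul_le_mul_iff_of_pos_right hQ]
    have huQ : u * (((r:ℝ)+s)*((r:ℝ)+2*s)) = r*s := div_mul_cancel₀ _ hQ.ne'
    have expand : (u - ε) * (2 * (Mk r s B (k+1) : ℝ) + 1) * (((r:ℝ)+s)*((r:ℝ)+2*s))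
        = (u * (((r:ℝ)+s)*((r:ℝ)+2*s))) * (2 * (Mk r s B (k+1) : ℝ) + 1)
          - (ε * (2 * (Mk r s B (k+1) : ℝ) + 1)) * (((r:ℝ)+s)*((r:ℝ)+2*s)) := by ring
    rw [expand, huQ]
    have h3 : (ε * (2 * (Mk r s B (k+1) : ℝ) + 1)) * (((r:ℝ)+s)*((r:ℝ)+2*s))
        ≥ (2*(k:ℝ)+3) * (((r:ℝ)+s)*((r:ℝ)+2*s)) :=
      mul_le_mul_of_nonneg_right hepsM hQ.le
    have hrp : (1:ℝ) ≤ r := by exact_mod_cast hr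
    have hsp : (1:ℝ) ≤ s := by exact_mod_cast hs
    have hkp : (0:ℝ) ≤ k := Nat.cast_nonneg k
    -- rs(2M+1) ≤ 2s(r+2s)N + 3rs ≤ 2(r+2s)((r+s)C + rk) + 3rs
    have h4 : (2*(k:ℝ)+3) * (((r:ℝ)+s)*((r:ℝ)+2*s)) ≥ 2*((r:ℝ)+2*s)*(r*k) + 3*(r*s) := by
      have expand2 : (2*(k:ℝ)+3) * (((r:ℝ)+s)*((r:ℝ)+2*s)) - (2*((r:ℝ)+2*s)*(r*k) + 3*(r*s))
          = 2*k*s*((r:ℝ)+2*s) + 3*(r:ℝ)*r + 6*r*s + 6*s*s := by ring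
      have p1 : (0:ℝ) ≤ 2*(k:ℝ)*s*((r:ℝ)+2*s) := by positivity
      have p2 : (0:ℝ) ≤ 3*(r:ℝ)*r := by positivity
      have p3 : (0:ℝ) ≤ 6*(r:ℝ)*s := by positivity
      have p4 : (0:ℝ) ≤ 6*(s:ℝ)*s := by positivity
      linarith
    have h5 : (s:ℝ) * ((r:ℝ)+2*s) * Nk r s B k ≤ ((r:ℝ)+2*s) * (((r:ℝ)+s) * C r s B k + r * k) := by
      have := mul_le_mul_of_nonneg_left hC (show (0:ℝ) ≤ (r:ℝ)+2*s by positivity)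
      nlinarith [this]
    nlinarith

lemma u_le_one : (r:ℝ)*s/(((r:ℝ)+s)*((r:ℝ)+2*s)) ≤ 1 := by
  rcases Nat.eq_zero_or_pos r with h | h
  · subst h
    rcases Nat.eq_zero_or_pos s with h' | h'
    · subst h'; norm_num
    · have : (0:ℝ) < s := by exact_mod_cast h'
      rw [div_le_one (by positivity)]
      push_cast; nlinarith
  · rcases Nat.eq_zero_or_pos s with h' | h'
    · subst h'; simp
    · have h1 : (0:ℝ) < r := by exact_mod_cast h
      have h2 : (0:ℝ) < s := by exact_mod_cast h'
      rw [div_le_one (by positivity)]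
      nlinarith

include hr hs hB hε hεB in
lemma liminf_pointwise {n : ℕ} (hn : B ≤ n) :
    ((r:ℝ)*s/(((r:ℝ)+s)*((r:ℝ)+2*s)) - ε)
      ≤ ((Sset r s B ∩ Set.Icc (-(n:ℤ)) n).ncard : ℝ) / (2 * n + 1) := by
  set u := (r:ℝ)*s/(((r:ℝ)+s)*((r:ℝ)+2*s))
  have hden : (0:ℝ) < 2 * (n:ℝ) + 1 := by positivity
  obtain ⟨k, hk1, hk2⟩ := exists_window hr hs hB hn
  have hcl := count_lower hr (s := s) (B := B) hk1 hk2.le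
  rcases le_or_gt (u - ε) 0 with hneg | hpos
  · refine le_trans hneg (by positivity)
  · rw [le_div_iff₀ hden]
    set M1 := Mk r s B (k+1) with hM1
    have hstep := liminf_step hr hs hB hε hεB k
    rcases le_or_gt n M1 with hcase | hcase
    · -- n ≤ M1
      have h1 : (u - ε) * (2*(n:ℝ)+1) ≤ (u - ε) * (2*(M1:ℝ)+1) := by
        apply mul_le_mul_of_nonneg_left _ hpos.le
        have : (n:ℝ) ≤ M1 := by exact_mod_cast hcase
        linarith
      have h2 : 2 * (C r s B k : ℝ) ≤ ((Sset r s B ∩ Set.Icc (-(n:ℤ)) n).ncard : ℝ) := by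
        have : 2 * C r s B k ≤ (Sset r s B ∩ Set.Icc (-(n:ℤ)) n).ncard := by omega
        exact_mod_cast this
      linarith
    · -- M1 < n
      have hsub : n - M1 + M1 = n := Nat.sub_add_cancel hcase.le
      have hcount : 2 * (C r s B k : ℝ) + 2 * ((n:ℝ) - M1)
          ≤ ((Sset r s B ∩ Set.Icc (-(n:ℤ)) n).ncard : ℝ) := by
        have h := hcl
        have : ((2 * C r s B k + 2 * (n - M1) : ℕ) : ℝ)
            ≤ ((Sset r s B ∩ Set.Icc (-(n:ℤ)) n).ncard : ℝ) := by exact_mod_cast h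
        push_cast [Nat.cast_sub hcase.le] at this
        linarith
      have hu1 : u - ε ≤ 1 := by
        have := u_le_one (r := r) (s := s)
        linarith
      have hM1n : (M1:ℝ) ≤ (n:ℝ) := by exact_mod_cast hcase.le
      have expand : (u - ε) * (2*(n:ℝ)+1)
          = (u - ε) * (2*(M1:ℝ)+1) + (u - ε) * (2*((n:ℝ) - M1)) := by ring
      rw [expand]
      have h3 : (u - ε) * (2*((n:ℝ) - M1)) ≤ 2*((n:ℝ) - M1) := by
        nlinarith
      linarith

include hr hs hB hε hεB in
lemma limsup_pointwise (k : ℕ) :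
    ((s:ℝ)/((r:ℝ)+s) - ε)
      ≤ ((Sset r s B ∩ Set.Icc (-(Nk r s B k : ℤ)) (Nk r s B k)).ncard : ℝ)
        / (2 * (Nk r s B k : ℝ) + 1) := by
  set t := (s:ℝ)/((r:ℝ)+s)
  have hden : (0:ℝ) < 2 * (Nk r s B k : ℝ) + 1 := by positivity
  rcases le_or_gt (t - ε) 0 with hneg | hpos
  · refine le_trans hneg (by positivity)
  · rw [le_div_iff₀ hden]
    have hcl := count_lower hr (s := s) (B := B) (le_refl (Nk r s B k))
      (N_mono hr (Nat.le_succ k))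
    have h2 : 2 * (C r s B k : ℝ)
        ≤ ((Sset r s B ∩ Set.Icc (-(Nk r s B k : ℤ)) (Nk r s B k)).ncard : ℝ) := by
      have h : 2 * C r s B k
          ≤ (Sset r s B ∩ Set.Icc (-(Nk r s B k : ℤ)) (Nk r s B k)).ncard := by
        omega
      exact_mod_cast h
    have hstep := limsup_step hr hs hB hε hεB k
    linarith

end RS3

open Filter

/-- For all odd positive integers `r` and `s` and `ε > 0`, there exist a set `S` of
integers and a bijection `f : ℕ → S` avoiding `(r, s)` 3-progressions, with lower
density of `S` at least `rs/((r+s)(r+2s)) − ε` and upper density at least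
`s/(r+s) − ε`. -/
theorem density_int_avoid_rs_3prog (r s : ℕ)
    (hrodd : Odd r) (hr : 0 < r) (hsodd : Odd s) (hs : 0 < s) (ε : ℝ) (hε : 0 < ε) :
    ∃ (S : Set ℤ) (f : ℕ → ℤ),
      Function.Injective f ∧ Set.range f = S ∧
      (¬ ∃ (i₁ i₂ i₃ : ℕ) (d : ℤ), i₁ < i₂ ∧ i₂ < i₃ ∧ d ≠ 0 ∧
        f i₂ = f i₁ + r * d ∧ f i₃ = f i₂ + s * d) ∧
      (r : ℝ) * s / (((r : ℝ) + s) * ((r : ℝ) + 2 * s)) - ε ≤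
        liminf (fun n : ℕ =>
          ((S ∩ Set.Icc (-(n : ℤ)) (n : ℤ)).ncard : ℝ) / (2 * n + 1)) atTop ∧
      (s : ℝ) / ((r : ℝ) + s) - ε ≤
        limsup (fun n : ℕ =>
          ((S ∩ Set.Icc (-(n : ℤ)) (n : ℤ)).ncard : ℝ) / (2 * n + 1)) atTop := by
  classical
  set B : ℕ := r * r + r + s + 1 + ⌈(2*(r:ℝ) + 2)/ε⌉₊ with hBdef
  have hB : r * r + r + s + 1 ≤ B := Nat.le_add_right _ _
  have hεB : 2*(r:ℝ) + 2 ≤ ε * B := by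
    have h1 : ((2*(r:ℝ)+2)/ε) ≤ (⌈(2*(r:ℝ) + 2)/ε⌉₊ : ℝ) := Nat.le_ceil _
    have h2 : ((⌈(2*(r:ℝ) + 2)/ε⌉₊ : ℕ) : ℝ) ≤ (B : ℝ) := by
      have : (⌈(2*(r:ℝ) + 2)/ε⌉₊ : ℕ) ≤ B := by omega
      exact_mod_cast this
    calc 2*(r:ℝ) + 2 = ε * ((2*(r:ℝ)+2)/ε) := by field_simp
      _ ≤ ε * B := mul_le_mul_of_nonneg_left (h1.trans h2) hε.le
  refine ⟨RS3.Sset r s B, RS3.fseq r s B, RS3.fseq_injective hr hs hB,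
    RS3.fseq_range hr hs hB, RS3.avoid hr hs hB hrodd hsodd, ?_, ?_⟩
  · -- liminf bound
    have hbound : ∀ᶠ (n : ℕ) in atTop,
        (r : ℝ) * s / (((r : ℝ) + s) * ((r : ℝ) + 2 * s)) - ε ≤
          ((RS3.Sset r s B ∩ Set.Icc (-(n : ℤ)) (n : ℤ)).ncard : ℝ) / (2 * n + 1) :=
      eventually_atTop.mpr ⟨B, fun n hn => RS3.liminf_pointwise hr hs hB hε hεB hn⟩
    refine Filter.le_liminf_of_le ?_ hbound
    apply Filter.IsBoundedUnder.isCoboundedUnder_ge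
    apply Filter.isBoundedUnder_of
    refine ⟨1, fun n => ?_⟩
    have hden : (0:ℝ) < 2 * (n:ℝ) + 1 := by positivity
    rw [div_le_one hden]
    have := RS3.ncard_SIcc_le (r := r) (s := s) (B := B) n
    have h2 : ((RS3.Sset r s B ∩ Set.Icc (-(n : ℤ)) (n : ℤ)).ncard : ℝ) ≤ ((2*n+1 : ℕ) : ℝ) := by
      exact_mod_cast this
    push_cast at h2
    linarith
  · -- limsup bound
    refine Filter.le_limsup_of_frequently_le ?_ ?_
    · rw [Filter.frequently_atTop]
      intro a
      refine ⟨RS3.Nk r s B a, ?_, ?_⟩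
      · have := RS3.N_ge_add hr hs hB a
        omega
      · have := RS3.limsup_pointwise hr hs hB hε hεB a
        convert this using 2 <;> push_cast <;> ring
    · apply Filter.isBoundedUnder_of
      refine ⟨1, fun n => ?_⟩
      have hden : (0:ℝ) < 2 * (n:ℝ) + 1 := by positivity
      rw [div_le_one hden]
      have := RS3.ncard_SIcc_le (r := r) (s := s) (B := B) n
      have h2 : ((RS3.Sset r s B ∩ Set.Icc (-(n : ℤ)) (n : ℤ)).ncard : ℝ) ≤ ((2*n+1 : ℕ) : ℝ) := by
        exact_mod_cast this
      push_cast at h2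
      linarith
end

section
/- For all odd positive integers r and s, there exists a bijection f : ℕ → ℤ that avoids (r⁴, r³s, r²s², rs³, s⁴) 6-progressions; that is, there are no indices i₁ < i₂ < ⋯ < i₆ and nonzero integer d such that f(i₂) = f(i₁) + r⁴·d, f(i₃) = f(i₂) + r³s·d, f(i₄) = f(i₃) + r²s²·d, f(i₅) = f(i₄) + rs³·d, and f(i₆) = f(i₅) + s⁴·d. -/
/-- Reverse the lowest `m` bits of a natural number. -/
def bitRev : ℕ → ℕ → ℕ
  | 0, _ => 0
  | m+1, u => u % 2 * 2^m + bitRev m (u/2)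

lemma bitRev_lt_two_pow (m u : ℕ) : bitRev m u < 2^m := by
  induction m generalizing u with
  | zero => simp [bitRev]
  | succ m ih =>
    have h1 := ih (u/2)
    have h2 : u % 2 ≤ 1 := by omega
    have h3 : u % 2 * 2^m ≤ 1 * 2^m := Nat.mul_le_mul_right _ h2
    have h4 : (2:ℕ)^(m+1) = 2^m * 2 := pow_succ 2 m
    simp only [bitRev]
    omega

lemma bitRev_lt : ∀ (v m u u' t Q Q' : ℕ), u < 2^m → u' < 2^m → t < 2^v →
    Q % 2 = 0 → Q' % 2 = 1 → u = t + 2^v*Q → u' = t + 2^v*Q' →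
    bitRev m u < bitRev m u' := by
  intro v
  induction v with
  | zero =>
    intro m u u' t Q Q' hu hu' ht hQ hQ' hequ hequ'
    simp only [pow_zero, one_mul] at ht hequ hequ'
    cases m with
    | zero =>
      simp only [pow_zero] at hu'
      omega
    | succ m =>
      simp only [bitRev]
      have e0 : u % 2 = 0 := by omega
      have e1 : u' % 2 = 1 := by omega
      rw [e0, e1]
      have := bitRev_lt_two_pow m (u/2)
      omega
  | succ w ih =>
    intro m u u' t Q Q' hu hu' ht hQ hQ' hequ hequ'
    have hps : (2:ℕ)^(w+1) = 2*2^w := by rw [pow_succ]; ring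
    have hA : 2^(w+1)*Q = 2*(2^w*Q) := by rw [hps]; ring
    have hA' : 2^(w+1)*Q' = 2*(2^w*Q') := by rw [hps]; ring
    rw [hA] at hequ
    rw [hA'] at hequ'
    cases m with
    | zero =>
      simp only [pow_zero] at hu'
      have hw : 0 < 2^w := Nat.pow_pos (by norm_num)
      have : 2^w*Q' ≥ Q' := Nat.le_mul_of_pos_left _ hw
      omega
    | succ m =>
      have hpm : (2:ℕ)^(m+1) = 2*2^m := by rw [pow_succ]; ring
      simp only [bitRev]
      -- u/2 = t/2 + 2^w*Q, u'/2 = t/2 + 2^w*Q', u%2 = u'%2 = t%2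
      have hmod : u % 2 = t % 2 := by omega
      have hmod' : u' % 2 = t % 2 := by omega
      have hdiv : u/2 = t/2 + 2^w*Q := by omega
      have hdiv' : u'/2 = t/2 + 2^w*Q' := by omega
      have hrec : bitRev m (u/2) < bitRev m (u'/2) := by
        apply ih m (u/2) (u'/2) (t/2) Q Q' (by omega) (by omega) (by omega) hQ hQ' hdiv hdiv'
      rw [hmod, hmod']
      omega

lemma bitRev_inj : ∀ (m u u' : ℕ), u < 2^m → u' < 2^m →
    bitRev m u = bitRev m u' → u = u' := by
  intro m
  induction m with
  | zero =>
    intro u u' hu hu' _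
    simp only [pow_zero] at hu hu'
    omega
  | succ m ih =>
    intro u u' hu hu' h
    simp only [bitRev] at h
    have b1 := bitRev_lt_two_pow m (u/2)
    have b2 := bitRev_lt_two_pow m (u'/2)
    have hpm : (2:ℕ)^(m+1) = 2*2^m := by rw [pow_succ]; ring
    have hmm : u % 2 = u' % 2 := by
      rcases Nat.mod_two_eq_zero_or_one u with h0|h0 <;>
        rcases Nat.mod_two_eq_zero_or_one u' with h1|h1 <;>
        rw [h0, h1] at h <;> omega
    have hbr : bitRev m (u/2) = bitRev m (u'/2) := by
      rw [hmm] at h; omega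
    have := ih (u/2) (u'/2) (by omega) (by omega) hbr
    omega

lemma parity_from_key (m v l p q : ℕ) (hp : p < 2^m) (hq : q < 2^m)
    (h : q = p + 2^v*(2*l+1)) (hk : bitRev m p < bitRev m q) :
    p/2^v % 2 = 0 ∧ q/2^v % 2 = 1 := by
  have hvpos : 0 < 2^v := Nat.pow_pos (by norm_num)
  have hpd : 2^v * (p / 2^v) + p % 2^v = p := Nat.div_add_mod p (2^v)
  set Q := p / 2^v with hQdef
  set t := p % 2^v with htdef
  have ht : t < 2^v := Nat.mod_lt _ hvpos
  have hq' : q = t + 2^v*(Q + (2*l+1)) := by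
    rw [Nat.mul_add]; omega
  have hqdiv : q / 2^v = Q + (2*l+1) := by
    rw [hq', Nat.add_mul_div_left _ _ hvpos, Nat.div_eq_of_lt ht, Nat.zero_add]
  rcases Nat.mod_two_eq_zero_or_one Q with hQ0 | hQ1
  · constructor
    · exact hQ0
    · rw [hqdiv]; omega
  · exfalso
    have : bitRev m q < bitRev m p :=
      bitRev_lt v m q p t (Q + (2*l+1)) Q hq hp ht (by omega) hQ1 hq' (by omega)
    omega

lemma parity_from_key' (m v l p q : ℕ) (hp : p < 2^m) (hq : q < 2^m)
    (h : q = p + 2^v*(2*l+1)) (hk : bitRev m q < bitRev m p) :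
    p/2^v % 2 = 1 ∧ q/2^v % 2 = 0 := by
  have hvpos : 0 < 2^v := Nat.pow_pos (by norm_num)
  have hpd : 2^v * (p / 2^v) + p % 2^v = p := Nat.div_add_mod p (2^v)
  set Q := p / 2^v with hQdef
  set t := p % 2^v with htdef
  have ht : t < 2^v := Nat.mod_lt _ hvpos
  have hq' : q = t + 2^v*(Q + (2*l+1)) := by
    rw [Nat.mul_add]; omega
  have hqdiv : q / 2^v = Q + (2*l+1) := by
    rw [hq', Nat.add_mul_div_left _ _ hvpos, Nat.div_eq_of_lt ht, Nat.zero_add]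
  rcases Nat.mod_two_eq_zero_or_one Q with hQ0 | hQ1
  · exfalso
    have : bitRev m p < bitRev m q :=
      bitRev_lt v m p q t Q (Q + (2*l+1)) hp hq ht hQ0 (by omega) (by omega) hq'
    omega
  · constructor
    · exact hQ1
    · rw [hqdiv]; omega

/-- Block index of an integer: integers with `|x| < 2^(β(k+1))` have block `≤ k`. -/
def blkOf (β : ℕ) (x : ℤ) : ℕ := Nat.log 2 x.natAbs / β

def mOf (β : ℕ) (x : ℤ) : ℕ := β * (blkOf β x + 1) + 1

def uOf (β : ℕ) (x : ℤ) : ℕ := (x + 2^(β * (blkOf β x + 1))).toNat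

def gOf (β : ℕ) (x : ℤ) : ℕ := 2^(mOf β x) + bitRev (mOf β x) (uOf β x)

lemma blk_le_iff {β : ℕ} (hβ : 0 < β) (x : ℤ) (k : ℕ) :
    blkOf β x ≤ k ↔ x.natAbs < 2^(β*(k+1)) := by
  have h1 : blkOf β x ≤ k ↔ Nat.log 2 x.natAbs < (k+1)*β := by
    unfold blkOf
    rw [← Nat.lt_succ_iff, Nat.div_lt_iff_lt_mul hβ]
  rw [h1]
  rcases Nat.eq_zero_or_pos x.natAbs with h0 | h0
  · rw [h0]
    simp only [Nat.log_zero_right]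
    exact ⟨fun _ => Nat.pow_pos (by norm_num),
           fun _ => Nat.mul_pos (Nat.succ_pos k) hβ⟩
  · rw [Nat.log_lt_iff_lt_pow (by norm_num) (by omega)]
    rw [Nat.mul_comm]

lemma abs_lt_pow {β : ℕ} (hβ : 0 < β) (x : ℤ) :
    x.natAbs < 2^(β*(blkOf β x + 1)) := (blk_le_iff hβ x _).mp le_rfl

lemma uOf_cast {β : ℕ} (hβ : 0 < β) (x : ℤ) :
    (uOf β x : ℤ) = x + 2^(β * (blkOf β x + 1)) := by
  have h := abs_lt_pow hβ x
  have hc : ((2^(β * (blkOf β x + 1)) : ℕ) : ℤ) = (2:ℤ)^(β * (blkOf β x + 1)) := by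
    push_cast; ring
  unfold uOf
  rw [← hc]
  omega

lemma uOf_lt {β : ℕ} (hβ : 0 < β) (x : ℤ) : uOf β x < 2^(mOf β x) := by
  have h := abs_lt_pow hβ x
  have hc := uOf_cast hβ x
  have hc2 : ((2^(β * (blkOf β x + 1)) : ℕ) : ℤ) = (2:ℤ)^(β * (blkOf β x + 1)) := by
    push_cast; ring
  have hm : (2:ℕ)^(mOf β x) = 2 * 2^(β * (blkOf β x + 1)) := by
    unfold mOf; rw [pow_succ]; ring
  rw [← hc2] at hc
  omega

lemma g_lt_of_blk_lt {β : ℕ} (hβ : 0 < β) {x y : ℤ} (h : blkOf β x < blkOf β y) :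
    gOf β x < gOf β y := by
  have hm : mOf β x + 1 ≤ mOf β y := by
    unfold mOf
    have : β * (blkOf β x + 1) + β ≤ β * (blkOf β y + 1) := by
      have : blkOf β x + 2 ≤ blkOf β y + 1 := by omega
      calc β * (blkOf β x + 1) + β = β * (blkOf β x + 2) := by ring
        _ ≤ β * (blkOf β y + 1) := Nat.mul_le_mul_left _ this
    omega
  have h1 := bitRev_lt_two_pow (mOf β x) (uOf β x)
  have h2 : (2:ℕ)^(mOf β x + 1) ≤ 2^(mOf β y) := Nat.pow_le_pow_right (by norm_num) hm
  have h3 : (2:ℕ)^(mOf β x + 1) = 2 * 2^(mOf β x) := by rw [pow_succ]; ring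
  unfold gOf
  omega

lemma g_blk_mono {β : ℕ} (hβ : 0 < β) {x y : ℤ} (h : gOf β x < gOf β y) :
    blkOf β x ≤ blkOf β y := by
  by_contra hcon
  have := g_lt_of_blk_lt hβ (show blkOf β y < blkOf β x by omega)
  omega

lemma gOf_injective {β : ℕ} (hβ : 0 < β) : Function.Injective (gOf β) := by
  intro x y h
  have hblk : blkOf β x = blkOf β y := by
    rcases lt_trichotomy (blkOf β x) (blkOf β y) with hl | he | hl
    · have := g_lt_of_blk_lt hβ hl; omega
    · exact he
    · have := g_lt_of_blk_lt hβ hl; omega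
  have hm : mOf β x = mOf β y := by unfold mOf; rw [hblk]
  have hkey : bitRev (mOf β y) (uOf β x) = bitRev (mOf β y) (uOf β y) := by
    unfold gOf at h; rw [hm] at h; omega
  have hux : uOf β x < 2^(mOf β y) := hm ▸ uOf_lt hβ x
  have hu : uOf β x = uOf β y := bitRev_inj _ _ _ hux (uOf_lt hβ y) hkey
  have c1 := uOf_cast hβ x
  have c2 := uOf_cast hβ y
  rw [hblk] at c1
  rw [hu] at c1
  omega

lemma triple_contra {β : ℕ} (hβ : 0 < β) (κ v : ℕ) (a b c e₁ e₂ : ℤ) (l₁ l₂ : ℕ)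
    (hab : b = a + e₁) (hbc : c = b + e₂)
    (hka : blkOf β a = κ) (hkb : blkOf β b = κ) (hkc : blkOf β c = κ)
    (he₁ : e₁.natAbs = 2^v * (2*l₁+1)) (he₂ : e₂.natAbs = 2^v*(2*l₂+1))
    (hsign : (0 < e₁ ∧ 0 < e₂) ∨ (e₁ < 0 ∧ e₂ < 0))
    (g1 : gOf β a < gOf β b) (g2 : gOf β b < gOf β c) : False := by
  set M := β*(κ+1)+1 with hM
  have hma : mOf β a = M := by unfold mOf; rw [hka]
  have hmb : mOf β b = M := by unfold mOf; rw [hkb]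
  have hmc : mOf β c = M := by unfold mOf; rw [hkc]
  have k1 : bitRev M (uOf β a) < bitRev M (uOf β b) := by
    unfold gOf at g1; rw [hma, hmb] at g1; omega
  have k2 : bitRev M (uOf β b) < bitRev M (uOf β c) := by
    unfold gOf at g2; rw [hmb, hmc] at g2; omega
  have pa_lt : uOf β a < 2^M := hma ▸ uOf_lt hβ a
  have pb_lt : uOf β b < 2^M := hmb ▸ uOf_lt hβ b
  have pc_lt : uOf β c < 2^M := hmc ▸ uOf_lt hβ c
  have ca : (uOf β a : ℤ) = a + 2^(β*(κ+1)) := by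
    have := uOf_cast hβ a; rw [hka] at this; exact this
  have cb : (uOf β b : ℤ) = b + 2^(β*(κ+1)) := by
    have := uOf_cast hβ b; rw [hkb] at this; exact this
  have cc : (uOf β c : ℤ) = c + 2^(β*(κ+1)) := by
    have := uOf_cast hβ c; rw [hkc] at this; exact this
  rcases hsign with ⟨hp1, hp2⟩ | ⟨hn1, hn2⟩
  · have h1 : (uOf β b : ℤ) = (uOf β a : ℤ) + ((2^v*(2*l₁+1) : ℕ) : ℤ) := by
      have h2 : ((e₁.natAbs : ℕ) : ℤ) = e₁ := Int.natAbs_of_nonneg (le_of_lt hp1)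
      rw [he₁] at h2
      rw [ca, cb, hab, h2]; ring
    have hb1 : uOf β b = uOf β a + 2^v*(2*l₁+1) := by omega
    have h1' : (uOf β c : ℤ) = (uOf β b : ℤ) + ((2^v*(2*l₂+1) : ℕ) : ℤ) := by
      have h2 : ((e₂.natAbs : ℕ) : ℤ) = e₂ := Int.natAbs_of_nonneg (le_of_lt hp2)
      rw [he₂] at h2
      rw [cb, cc, hbc, h2]; ring
    have hc1 : uOf β c = uOf β b + 2^v*(2*l₂+1) := by omega
    have P1 := (parity_from_key M v l₁ (uOf β a) (uOf β b) pa_lt pb_lt hb1 k1).2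
    have P2 := (parity_from_key M v l₂ (uOf β b) (uOf β c) pb_lt pc_lt hc1 k2).1
    omega
  · have h1 : (uOf β a : ℤ) = (uOf β b : ℤ) + ((2^v*(2*l₁+1) : ℕ) : ℤ) := by
      have h2 : ((e₁.natAbs : ℕ) : ℤ) = -e₁ := by
        rw [Int.ofNat_natAbs_of_nonpos (le_of_lt hn1)]
      rw [he₁] at h2
      rw [ca, cb, hab]; rw [h2]; ring
    have hb1 : uOf β a = uOf β b + 2^v*(2*l₁+1) := by omega
    have h1' : (uOf β b : ℤ) = (uOf β c : ℤ) + ((2^v*(2*l₂+1) : ℕ) : ℤ) := by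
      have h2 : ((e₂.natAbs : ℕ) : ℤ) = -e₂ := by
        rw [Int.ofNat_natAbs_of_nonpos (le_of_lt hn2)]
      rw [he₂] at h2
      rw [cb, cc, hbc]; rw [h2]; ring
    have hc1 : uOf β b = uOf β c + 2^v*(2*l₂+1) := by omega
    have P1 := (parity_from_key' M v l₁ (uOf β b) (uOf β a) pb_lt pa_lt hb1 k1).1
    have P2 := (parity_from_key' M v l₂ (uOf β c) (uOf β b) pc_lt pb_lt hc1 k2).2
    omega

lemma weight_le (r s : ℤ) (hr : 0 < r) (hs : 0 < s) :
    r^3*s + r^2*s^2 + r*s^3 + s^4 ≤ (r+s)^4 := by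
  nlinarith [pow_pos hr 4, mul_pos (pow_pos hr 3) hs, mul_pos (pow_pos hr 2) (pow_pos hs 2),
    mul_pos hr (pow_pos hs 3)]

lemma six_prog_contra (r s : ℕ) (hrodd : Odd r) (hr : 0 < r) (hsodd : Odd s) (hs : 0 < s)
    (d : ℤ) (hd : d ≠ 0) (y₁ y₂ y₃ y₄ y₅ y₆ : ℤ)
    (E2 : y₂ = y₁ + (r : ℤ) ^ 4 * d)
    (E3 : y₃ = y₂ + (r : ℤ) ^ 3 * s * d)
    (E4 : y₄ = y₃ + (r : ℤ) ^ 2 * (s : ℤ) ^ 2 * d)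
    (E5 : y₅ = y₄ + (r : ℤ) * (s : ℤ) ^ 3 * d)
    (E6 : y₆ = y₅ + (s : ℤ) ^ 4 * d)
    (β C : ℕ) (hCdef : C = (r+s)^4) (hβdef : β = 2*C)
    (G12 : gOf β y₁ < gOf β y₂) (G23 : gOf β y₂ < gOf β y₃)
    (G34 : gOf β y₃ < gOf β y₄) (G45 : gOf β y₄ < gOf β y₅)
    (G56 : gOf β y₅ < gOf β y₆) : False := by
  have hC : 0 < C := by rw [hCdef]; positivity
  have hβ : 0 < β := by omega
  have b12 : blkOf β y₁ ≤ blkOf β y₂ := g_blk_mono hβ G12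
  have b23 : blkOf β y₂ ≤ blkOf β y₃ := g_blk_mono hβ G23
  have b34 : blkOf β y₃ ≤ blkOf β y₄ := g_blk_mono hβ G34
  have b45 : blkOf β y₄ ≤ blkOf β y₅ := g_blk_mono hβ G45
  have b56 : blkOf β y₅ ≤ blkOf β y₆ := g_blk_mono hβ G56
  set k := blkOf β y₂ with hk
  have A1 : y₁.natAbs < 2^(β*(k+1)) := (blk_le_iff hβ _ _).mp b12
  have A2 : y₂.natAbs < 2^(β*(k+1)) := (blk_le_iff hβ _ _).mp le_rfl
  -- decompose d
  have hdna : d.natAbs ≠ 0 := by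
    intro h; exact hd (Int.natAbs_eq_zero.mp h)
  obtain ⟨v, c, hcodd, hdecomp⟩ := Nat.exists_eq_two_pow_mul_odd hdna
  have hy62 : y₆ - y₂ = ((r:ℤ)^3*(s:ℤ) + (r:ℤ)^2*(s:ℤ)^2 + (r:ℤ)*(s:ℤ)^3 + (s:ℤ)^4) * d := by
    rw [E6, E5, E4, E3]; ring
  have hy21 : y₂ - y₁ = (r:ℤ)^4 * d := by
    rw [E2]; ring
  have hrz : (0:ℤ) < (r:ℤ) := by exact_mod_cast hr
  have hsz : (0:ℤ) < (s:ℤ) := by exact_mod_cast hs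
  have A6 : y₆.natAbs < 2^(β*((k+1)+1)) := by
    have hTnat : ((2^(β*(k+1)) : ℕ) : ℤ) = (2:ℤ)^(β*(k+1)) := by push_cast; ring
    set T : ℤ := (2:ℤ)^(β*(k+1)) with hT
    have hA1 : |y₁| < T := by
      rw [Int.abs_eq_natAbs, ← hTnat]
      exact_mod_cast A1
    have hA2 : |y₂| < T := by
      rw [Int.abs_eq_natAbs, ← hTnat]
      exact_mod_cast A2
    have htri : |y₆| ≤ |y₂| + |y₆ - y₂| := by
      have h := abs_sub_abs_le_abs_sub y₆ y₂
      linarith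
    have hSz : |y₆ - y₂| =
        ((r:ℤ)^3*(s:ℤ) + (r:ℤ)^2*(s:ℤ)^2 + (r:ℤ)*(s:ℤ)^3 + (s:ℤ)^4) * |d| := by
      rw [hy62, abs_mul]
      congr 1
      rw [abs_of_nonneg]
      positivity
    have hd21 : |d| ≤ |y₂ - y₁| := by
      rw [hy21, abs_mul]
      have h1 : (1:ℤ) ≤ |(r:ℤ)^4| := by
        rw [abs_of_nonneg (by positivity)]
        have := pow_pos hrz 4
        omega
      have := mul_le_mul_of_nonneg_right h1 (abs_nonneg d)
      linarith
    have h21 : |y₂ - y₁| ≤ |y₂| + |y₁| := by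
      calc |y₂ - y₁| = |y₂ + (-y₁)| := by ring_nf
        _ ≤ |y₂| + |(-y₁)| := abs_add_le _ _
        _ = |y₂| + |y₁| := by rw [abs_neg]
    have hSC : ((r:ℤ)^3*(s:ℤ) + (r:ℤ)^2*(s:ℤ)^2 + (r:ℤ)*(s:ℤ)^3 + (s:ℤ)^4) ≤ (C:ℤ) := by
      have hCe : (C:ℤ) = ((r:ℤ)+(s:ℤ))^4 := by rw [hCdef]; push_cast; ring
      rw [hCe]
      exact weight_le _ _ hrz hsz
    have hCz : (0:ℤ) ≤ (C:ℤ) := Int.natCast_nonneg C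
    have h2β : (2*(C:ℤ)+1) ≤ (2:ℤ)^β := by
      have hnat : 2*C+1 ≤ 2^(2*C) := Nat.lt_two_pow_self
      rw [hβdef]
      exact_mod_cast hnat
    have hTpos : (0:ℤ) < T := by rw [hT]; positivity
    have hdle : |d| ≤ |y₂| + |y₁| := le_trans hd21 h21
    have step1 : |y₆| ≤ |y₂| + (C:ℤ)*|d| := by
      have := mul_le_mul_of_nonneg_right hSC (abs_nonneg d)
      rw [hSz] at htri
      linarith
    have step2 : (C:ℤ)*|d| ≤ (C:ℤ)*(|y₂| + |y₁|) :=
      mul_le_mul_of_nonneg_left hdle hCz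
    have step3 : (C:ℤ)*(|y₂| + |y₁|) ≤ (C:ℤ)*(2*T) := by
      apply mul_le_mul_of_nonneg_left _ hCz
      linarith
    have hfin : |y₆| < (2:ℤ)^β * T := by
      have ha : |y₆| < T + (C:ℤ)*(2*T) := by linarith
      have hb : (2*(C:ℤ)+1)*T ≤ (2:ℤ)^β*T :=
        mul_le_mul_of_nonneg_right h2β (le_of_lt hTpos)
      have hc : T + (C:ℤ)*(2*T) = (2*(C:ℤ)+1)*T := by ring
      linarith
    have hpow : (2:ℤ)^β * T = (2:ℤ)^(β*((k+1)+1)) := by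
      rw [hT, ← pow_add]
      congr 1
      ring
    rw [hpow] at hfin
    have hcast : ((2^(β*((k+1)+1)) : ℕ) : ℤ) = (2:ℤ)^(β*((k+1)+1)) := by push_cast; ring
    rw [Int.abs_eq_natAbs, ← hcast] at hfin
    exact_mod_cast hfin
  have b6 : blkOf β y₆ ≤ k+1 := (blk_le_iff hβ _ _).mpr A6
  have hsign : ∀ w₁ w₂ : ℤ, 0 < w₁ → 0 < w₂ →
      (0 < w₁*d ∧ 0 < w₂*d) ∨ (w₁*d < 0 ∧ w₂*d < 0) := by
    intro w₁ w₂ hw₁ hw₂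
    rcases hd.lt_or_gt with hneg | hpos
    · right
      exact ⟨mul_neg_of_pos_of_neg hw₁ hneg, mul_neg_of_pos_of_neg hw₂ hneg⟩
    · left
      exact ⟨mul_pos hw₁ hpos, mul_pos hw₂ hpos⟩
  by_cases h4 : blkOf β y₄ ≤ k
  · -- triple y₂, y₃, y₄ in block k
    have k3 : blkOf β y₃ = k := le_antisymm (le_trans b34 h4) b23
    have k4 : blkOf β y₄ = k := le_antisymm h4 (le_trans b23 b34)
    obtain ⟨l₁, hl₁⟩ := (hrodd.pow (n := 3)).mul (hsodd.mul hcodd)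
    obtain ⟨l₂, hl₂⟩ := ((hrodd.pow (n := 2)).mul (hsodd.pow (n := 2))).mul hcodd
    have he₁ : ((r:ℤ)^3*(s:ℤ)*d).natAbs = 2^v * (2*l₁+1) := by
      simp only [Int.natAbs_mul, Int.natAbs_pow, Int.natAbs_natCast]
      rw [hdecomp, ← hl₁]
      ring
    have he₂ : ((r:ℤ)^2*(s:ℤ)^2*d).natAbs = 2^v * (2*l₂+1) := by
      simp only [Int.natAbs_mul, Int.natAbs_pow, Int.natAbs_natCast]
      rw [hdecomp, ← hl₂]
      ring
    exact triple_contra hβ k v y₂ y₃ y₄ ((r:ℤ)^3*(s:ℤ)*d) ((r:ℤ)^2*(s:ℤ)^2*d) l₁ l₂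
      E3 E4 rfl k3 k4 he₁ he₂
      (hsign _ _ (mul_pos (pow_pos hrz 3) hsz) (mul_pos (pow_pos hrz 2) (pow_pos hsz 2)))
      G23 G34
  · -- triple y₄, y₅, y₆ in block k+1
    have h4' : blkOf β y₄ = k+1 := le_antisymm (le_trans b45 (le_trans b56 b6)) (by omega)
    have k5 : blkOf β y₅ = k+1 := le_antisymm (le_trans b56 b6) (h4' ▸ b45)
    have k6 : blkOf β y₆ = k+1 := le_antisymm b6 (k5 ▸ b56)
    obtain ⟨l₁, hl₁⟩ := hrodd.mul ((hsodd.pow (n := 3)).mul hcodd)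
    obtain ⟨l₂, hl₂⟩ := (hsodd.pow (n := 4)).mul hcodd
    have he₁ : ((r:ℤ)*(s:ℤ)^3*d).natAbs = 2^v * (2*l₁+1) := by
      simp only [Int.natAbs_mul, Int.natAbs_pow, Int.natAbs_natCast]
      rw [hdecomp, ← hl₁]
      ring
    have he₂ : ((s:ℤ)^4*d).natAbs = 2^v * (2*l₂+1) := by
      simp only [Int.natAbs_mul, Int.natAbs_pow, Int.natAbs_natCast]
      rw [hdecomp, ← hl₂]
      ring
    exact triple_contra hβ (k+1) v y₄ y₅ y₆ ((r:ℤ)*(s:ℤ)^3*d) ((s:ℤ)^4*d) l₁ l₂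
      E5 E6 h4' k5 k6 he₁ he₂
      (hsign _ _ (mul_pos hrz (pow_pos hsz 3)) (pow_pos hsz 4))
      G45 G56

/-- For all odd positive integers `r` and `s`, there exists a permutation of the
integers avoiding `(r⁴, r³s, r²s², rs³, s⁴)` 6-progressions. -/
theorem exists_perm_int_avoiding_gen_6prog (r s : ℕ)
    (hrodd : Odd r) (hr : 0 < r) (hsodd : Odd s) (hs : 0 < s) :
    ∃ f : ℕ → ℤ, Function.Bijective f ∧
      ¬ ∃ (i₁ i₂ i₃ i₄ i₅ i₆ : ℕ) (d : ℤ),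
        i₁ < i₂ ∧ i₂ < i₃ ∧ i₃ < i₄ ∧ i₄ < i₅ ∧ i₅ < i₆ ∧ d ≠ 0 ∧
        f i₂ = f i₁ + (r : ℤ) ^ 4 * d ∧
        f i₃ = f i₂ + (r : ℤ) ^ 3 * s * d ∧
        f i₄ = f i₃ + (r : ℤ) ^ 2 * (s : ℤ) ^ 2 * d ∧
        f i₅ = f i₄ + (r : ℤ) * (s : ℤ) ^ 3 * d ∧
        f i₆ = f i₅ + (s : ℤ) ^ 4 * d := by
  classical
  set C : ℕ := (r+s)^4 with hCdef
  set β : ℕ := 2*C with hβdef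
  have hC : 0 < C := pow_pos (by omega) 4
  have hβ : 0 < β := by omega
  have hg : Function.Injective (gOf β) := gOf_injective hβ
  set S : Set ℕ := Set.range (gOf β) with hSdef
  haveI : Infinite S := (Set.infinite_range_of_injective hg).to_subtype
  let iso := Nat.Subtype.orderIsoOfNat S
  let f : ℕ → ℤ := fun n => (Equiv.ofInjective (gOf β) hg).symm (iso n)
  have hgf : ∀ n, gOf β (f n) = (iso n : ℕ) := fun n =>
    Equiv.apply_ofInjective_symm hg _
  have hmono : ∀ i j, i < j → gOf β (f i) < gOf β (f j) := by
    intro i j hij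
    rw [hgf, hgf]
    exact Subtype.coe_lt_coe.mpr ((OrderIso.lt_iff_lt iso).mpr hij)
  refine ⟨f, ?_, ?_⟩
  · exact (iso.toEquiv.trans (Equiv.ofInjective (gOf β) hg).symm).bijective
  · rintro ⟨i₁, i₂, i₃, i₄, i₅, i₆, d, h12, h23, h34, h45, h56, hd, E2, E3, E4, E5, E6⟩
    exact six_prog_contra r s hrodd hr hsodd hs d hd
      (f i₁) (f i₂) (f i₃) (f i₄) (f i₅) (f i₆) E2 E3 E4 E5 E6 β C hCdef hβdef
      (hmono _ _ h12) (hmono _ _ h23) (hmono _ _ h34) (hmono _ _ h45) (hmono _ _ h56)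
end

section
/- For every finite set A of integers, there exists an enumeration of A (a bijection σ : {1,…,|A|} → A) such that the sequence σ(1), …, σ(|A|) contains no 3-term arithmetic progression: there are no indices i₁ < i₂ < i₃ and nonzero integer d with σ(i₂) = σ(i₁) + d and σ(i₃) = σ(i₂) + d. -/
/-- Reverse the low `k` binary digits of `n`. -/
def vkey : ℕ → ℕ → ℕ
  | 0, _ => 0
  | k+1, n => (n % 2) * 2^k + vkey k (n / 2)

lemma vkey_lt : ∀ k n, vkey k n < 2^k
  | 0, _ => by simp [vkey]
  | k+1, n => by
    have h := vkey_lt k (n / 2)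
    have h2 : n % 2 < 2 := Nat.mod_lt _ (by norm_num)
    have hp : (2:ℕ)^(k+1) = 2^k * 2 := pow_succ 2 k
    simp only [vkey]
    rcases Nat.mod_two_eq_zero_or_one n with h3 | h3 <;> rw [h3] <;> omega

lemma vkey_inj : ∀ k x y, x < 2^k → y < 2^k → vkey k x = vkey k y → x = y
  | 0, x, y, hx, hy, _ => by simp [pow_zero] at hx hy; omega
  | k+1, x, y, hx, hy, h => by
    have hx2 := vkey_lt k (x / 2)
    have hy2 := vkey_lt k (y / 2)
    simp only [vkey] at h
    have hp : (2:ℕ)^(k+1) = 2^k * 2 := pow_succ 2 k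
    rcases Nat.mod_two_eq_zero_or_one x with h1 | h1 <;>
      rcases Nat.mod_two_eq_zero_or_one y with h2 | h2 <;>
      rw [h1, h2] at h
    · have := vkey_inj k (x / 2) (y / 2) (by omega) (by omega) (by omega); omega
    · omega
    · omega
    · have := vkey_inj k (x / 2) (y / 2) (by omega) (by omega) (by omega); omega

lemma vkey_not_between : ∀ k x z m, x < 2^k → z < 2^k → m < 2^k →
    x + z = 2 * m → x ≠ m → ¬(vkey k x < vkey k m ∧ vkey k m < vkey k z)
  | 0, x, z, m, hx, hz, hm, hsum, hne, _ => by
    simp [pow_zero] at hx hz hm; omega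
  | k+1, x, z, m, hx, hz, hm, hsum, hne, ⟨h1, h2⟩ => by
    have hbx := vkey_lt k (x / 2)
    have hbz := vkey_lt k (z / 2)
    have hbm := vkey_lt k (m / 2)
    simp only [vkey] at h1 h2
    have hxz : z % 2 = x % 2 := by omega
    have hp : (2:ℕ)^(k+1) = 2^k * 2 := pow_succ 2 k
    rcases Nat.mod_two_eq_zero_or_one x with hx2 | hx2 <;>
      rcases Nat.mod_two_eq_zero_or_one m with hm2 | hm2 <;>
      rw [hx2] at hxz <;> rw [hx2, hm2] at h1 <;> rw [hm2, hxz] at h2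
    · exact vkey_not_between k (x/2) (z/2) (m/2) (by omega) (by omega) (by omega)
        (by omega) (by omega) ⟨by omega, by omega⟩
    · omega
    · omega
    · exact vkey_not_between k (x/2) (z/2) (m/2) (by omega) (by omega) (by omega)
        (by omega) (by omega) ⟨by omega, by omega⟩

/-- Every finite set of integers can be enumerated so that the resulting sequence
contains no 3-term arithmetic progression. -/
theorem exists_enumeration_avoiding_3AP (A : Finset ℤ) :
    ∃ σ : Fin A.card → ℤ, Function.Injective σ ∧ Set.range σ = ↑A ∧
      ¬ ∃ (i₁ i₂ i₃ : Fin A.card) (d : ℤ), i₁ < i₂ ∧ i₂ < i₃ ∧ d ≠ 0 ∧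
        σ i₂ = σ i₁ + d ∧ σ i₃ = σ i₂ + d := by
  rcases A.eq_empty_or_nonempty with rfl | hA
  · haveI : IsEmpty (Fin (Finset.card (∅ : Finset ℤ))) := by
      rw [Finset.card_empty]; exact Fin.isEmpty
    refine ⟨fun _ => 0, fun i j _ => Subsingleton.elim i j, by simp, ?_⟩
    rintro ⟨i, -⟩
    exact isEmptyElim i
  · set lo := A.min' hA with hlo
    set hi := A.max' hA with hhi
    set k := (hi - lo).toNat with hk
    set g : ℤ → ℕ := fun z => (z - lo).toNat with hg
    have hbound : ∀ a ∈ A, g a < 2 ^ k := by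
      intro a ha
      have h1 := A.min'_le a ha
      have h2 := A.le_max' a ha
      have h3 : g a ≤ k := by simp only [hg, hk]; omega
      exact lt_of_le_of_lt h3 (Nat.lt_two_pow_self (n := k))
    have ginj : ∀ a ∈ A, ∀ b ∈ A, g a = g b → a = b := by
      intro a ha b hb h
      have h1 := A.min'_le a ha
      have h2 := A.min'_le b hb
      simp only [hg] at h
      omega
    set le : ℤ → ℤ → Bool := fun a b => decide (vkey k (g a) ≤ vkey k (g b)) with hle
    set l : List ℤ := (A.sort (· ≤ ·)).mergeSort le with hl
    have hperm : l.Perm (A.sort (· ≤ ·)) := List.mergeSort_perm _ _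
    have hlen : l.length = A.card := by rw [hperm.length_eq, Finset.length_sort]
    have hnodup : l.Nodup := hperm.nodup_iff.mpr (A.sort_nodup _)
    have hmem : ∀ x, x ∈ l ↔ x ∈ A := fun x => hperm.mem_iff.trans (Finset.mem_sort _)
    have hsorted : l.Pairwise (fun a b => le a b) := by
      apply List.pairwise_mergeSort
      · intro a b c hab hbc
        simp only [hle, decide_eq_true_eq] at *
        omega
      · intro a b
        simp only [hle]
        rcases Nat.le_total (vkey k (g a)) (vkey k (g b)) with h | h <;> simp [h]
    refine ⟨fun i => l.get (Fin.cast hlen.symm i), ?_, ?_, ?_⟩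
    · intro i j h
      exact Fin.cast_injective _ (List.nodup_iff_injective_get.mp hnodup h)
    · ext x
      simp only [Set.mem_range, Finset.mem_coe]
      constructor
      · rintro ⟨i, rfl⟩
        exact (hmem _).mp (l.get_mem _)
      · intro hx
        obtain ⟨n, hn⟩ := List.mem_iff_get.mp ((hmem x).mpr hx)
        exact ⟨Fin.cast hlen n, by simpa using hn⟩
    · rintro ⟨i₁, i₂, i₃, d, h12, h23, hd, he2, he3⟩
      simp only at he2 he3
      set a₁ := l.get (Fin.cast hlen.symm i₁) with ha₁
      set a₂ := l.get (Fin.cast hlen.symm i₂) with ha₂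
      set a₃ := l.get (Fin.cast hlen.symm i₃) with ha₃
      have hm₁ : a₁ ∈ A := (hmem _).mp (l.get_mem _)
      have hm₂ : a₂ ∈ A := (hmem _).mp (l.get_mem _)
      have hm₃ : a₃ ∈ A := (hmem _).mp (l.get_mem _)
      have hne12 : a₁ ≠ a₂ := by
        intro h
        have := List.nodup_iff_injective_get.mp hnodup h
        have : i₁ = i₂ := Fin.cast_injective _ this
        omega
      have hne23 : a₂ ≠ a₃ := by
        intro h
        have := List.nodup_iff_injective_get.mp hnodup h
        have : i₂ = i₃ := Fin.cast_injective _ this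
        omega
      have hpg := List.pairwise_iff_get.mp hsorted
      have hk12 : vkey k (g a₁) ≤ vkey k (g a₂) := by
        have := hpg (Fin.cast hlen.symm i₁) (Fin.cast hlen.symm i₂) (by simpa using h12)
        simpa [hle, ha₁, ha₂] using this
      have hk23 : vkey k (g a₂) ≤ vkey k (g a₃) := by
        have := hpg (Fin.cast hlen.symm i₂) (Fin.cast hlen.symm i₃) (by simpa using h23)
        simpa [hle, ha₂, ha₃] using this
      have hgne12 : g a₁ ≠ g a₂ := fun h => hne12 (ginj _ hm₁ _ hm₂ h)
      have hgne23 : g a₂ ≠ g a₃ := fun h => hne23 (ginj _ hm₂ _ hm₃ h)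
      have hk12' : vkey k (g a₁) < vkey k (g a₂) :=
        lt_of_le_of_ne hk12 (fun h => hgne12 (vkey_inj k _ _ (hbound _ hm₁) (hbound _ hm₂) h))
      have hk23' : vkey k (g a₂) < vkey k (g a₃) :=
        lt_of_le_of_ne hk23 (fun h => hgne23 (vkey_inj k _ _ (hbound _ hm₂) (hbound _ hm₃) h))
      have hlo₁ := A.min'_le a₁ hm₁
      have hlo₂ := A.min'_le a₂ hm₂
      have hlo₃ := A.min'_le a₃ hm₃
      have hsum : g a₁ + g a₃ = 2 * g a₂ := by simp only [hg]; omega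
      have hne : g a₁ ≠ g a₂ := hgne12
      exact vkey_not_between k (g a₁) (g a₃) (g a₂) (hbound _ hm₁) (hbound _ hm₃)
        (hbound _ hm₂) hsum hne ⟨hk12', hk23'⟩
end
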